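/- arXiv:math/0605177 — 4 statements merged into one kernel-verified Lean document; each statement's English description precedes it below -/
import Mathlib

section
/- Let $W$ be a Weyl group with simple reflections indexed by $I$, and let $\delta$ be an automorphism of $W$ permuting the simple reflections. Fix $J \subset I$. If $(J_n, w_n)_{n \geq 0}$ is a sequence with $J_0 = J$, $J_n = J_{n-1} \cap \delta^{-1}(w_{n-1}^{-1} J_{n-1})$ for $n \geq 1$, and $w_n \in {}^{J_n}W^{\delta(J_n)}$ with $w_n \in W_{J_{n-1}} w_{n-1}$ for $n \geq 1$, then the sequences $(J_n)$ and $(w_n)$ are eventually constant: there exists $m$ such that $J_m = J_{m+1} = \cdots$ and $w_m = w_{m+1} = \cdots$. -/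
/-!
Statement 0: Bédard sequences $(J_n, w_n)$ for a Weyl group with diagram
automorphism are eventually constant.
-/

open CoxeterSystem

variable {I W : Type*} [Group W] {M : CoxeterMatrix I}

/-- The standard parabolic subgroup `W_J`. -/
def parab (cs : CoxeterSystem M W) (J : Set I) : Subgroup W :=
  Subgroup.closure (cs.simple '' J)

/-- `w ∈ W^J`: `w` is the minimal length element of the coset `w W_J`. -/
def MinRight (cs : CoxeterSystem M W) (J : Set I) (w : W) : Prop :=
  ∀ u ∈ parab cs J, cs.length w ≤ cs.length (w * u)

/-- `w ∈ {}^J W`: `w` is the minimal length element of the coset `W_J w`. -/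
def MinLeft (cs : CoxeterSystem M W) (J : Set I) (w : W) : Prop :=
  ∀ u ∈ parab cs J, cs.length w ≤ cs.length (u * w)

/-- A Bédard sequence in `𝓣(J, δ)`, where the diagram automorphism `δ` of `W`
corresponds to the permutation `p` of the simple reflections:
`J₀ = J`; `Jₙ = J_{n-1} ∩ δ⁻¹(w_{n-1}⁻¹ J_{n-1})`;
`wₙ ∈ {}^{Jₙ}W^{δ(Jₙ)}`; and `wₙ ∈ W_{J_{n-1}} w_{n-1}` for `n ≥ 1`. -/
def BedardSeq (cs : CoxeterSystem M W) (p : Equiv.Perm I)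
    (J : Set I) (Jseq : ℕ → Set I) (wseq : ℕ → W) : Prop :=
  Jseq 0 = J ∧
  (∀ n, Jseq (n + 1) =
    {i | i ∈ Jseq n ∧ ∃ j ∈ Jseq n,
      (wseq n)⁻¹ * cs.simple j * wseq n = cs.simple (p i)}) ∧
  (∀ n, MinLeft cs (Jseq n) (wseq n) ∧ MinRight cs (p '' Jseq n) (wseq n)) ∧
  (∀ n, wseq (n + 1) * (wseq n)⁻¹ ∈ parab cs (Jseq n))

section BedardMachinery
open List

namespace BedardAux

noncomputable section
open scoped Classical

variable (cs : CoxeterSystem M W)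

local prefix:100 "s" => cs.simple
local prefix:100 "π" => cs.wordProd
local prefix:100 "ℓ" => cs.length

lemma conj_simple_simple (i : I) (t : W) : s i * (s i * t * s i) * s i = t := by
  rw [show s i * (s i * t * s i) * s i = (s i * s i) * t * (s i * s i) by group,
    cs.simple_mul_simple_self]
  group

/-- The signed conjugation map attached to a simple reflection. -/
def sgnAux (i : I) : W × ℤˣ → W × ℤˣ :=
  fun p => (s i * p.1 * s i, p.2 * (if p.1 = s i then -1 else 1))

lemma sgnAux_involutive (i : I) : Function.Involutive (sgnAux cs i) := by
  rintro ⟨w, ε⟩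
  simp only [sgnAux]
  refine Prod.ext (conj_simple_simple cs i w) ?_
  by_cases hw : w = s i
  · subst hw
    have h1 : s i * s i * s i = s i := by rw [cs.simple_mul_simple_self]; group
    simp [h1]
  · have h2 : ¬ (s i * w * s i = s i) := by
      intro hc
      apply hw
      have := congrArg (fun z => s i * z * s i) hc
      rw [conj_simple_simple cs i w] at this
      rw [this, cs.simple_mul_simple_self, one_mul]
    simp [hw, h2]

/-- The signed permutation attached to a simple reflection. -/
def sgnPerm (i : I) : Equiv.Perm (W × ℤˣ) := (sgnAux_involutive cs i).toPerm

@[simp] lemma sgnPerm_apply (i : I) (p : W × ℤˣ) :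
    sgnPerm cs i p = (s i * p.1 * s i, p.2 * (if p.1 = s i then -1 else 1)) := rfl

lemma simple_mul_pow (i j : I) (k : ℕ) :
    s j * (s i * s j) ^ k = ((s i * s j)⁻¹) ^ k * s j := by
  induction k with
  | zero => simp
  | succ k ih =>
    have hx : s j * (s i * s j) = (s i * s j)⁻¹ * s j := by
      rw [mul_inv_rev, cs.inv_simple, cs.inv_simple]; group
    rw [pow_succ, ← mul_assoc, ih, mul_assoc, hx, pow_succ]
    group

lemma conj_eq_iff (i j : I) (w : W) (k a : ℕ) :
    ((s i * s j) ^ k * w * ((s i * s j) ^ k)⁻¹ = ((s i * s j)⁻¹) ^ a * s j) ↔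
      (s i * s j) ^ (2 * k + a) * w = s j := by
  rw [mul_inv_eq_iff_eq_mul]
  have h1 : ((s i * s j)⁻¹) ^ a * s j * (s i * s j) ^ k
      = ((s i * s j)⁻¹) ^ (a + k) * s j := by
    rw [mul_assoc, simple_mul_pow cs i j k, ← mul_assoc, ← pow_add]
  rw [h1, inv_pow, eq_inv_mul_iff_mul_eq, ← mul_assoc, ← pow_add]
  have : a + k + k = 2 * k + a := by ring
  rw [this]

lemma sgnPerm_pow_apply (i j : I) (k : ℕ) (w : W) (ε : ℤˣ) :
    ((sgnPerm cs i * sgnPerm cs j) ^ k) (w, ε) =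
      ((s i * s j) ^ k * w * ((s i * s j) ^ k)⁻¹,
        ε * ∏ r ∈ Finset.range (2 * k),
          (if (s i * s j) ^ r * w = s j then (-1 : ℤˣ) else 1)) := by
  have hji : s j * s i = (s i * s j)⁻¹ := by
    rw [mul_inv_rev, cs.inv_simple, cs.inv_simple]
  induction k with
  | zero => simp
  | succ k ih =>
    rw [pow_succ', Equiv.Perm.mul_apply, ih, Equiv.Perm.mul_apply,
      sgnPerm_apply, sgnPerm_apply]
    dsimp only
    rw [Prod.mk.injEq]
    constructor
    · have hstep : s i * (s j * ((s i * s j) ^ k * w * ((s i * s j) ^ k)⁻¹) * s j) * s i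
          = (s i * s j) * ((s i * s j) ^ k * w * ((s i * s j) ^ k)⁻¹) * (s j * s i) := by
        group
      rw [hstep, hji, pow_succ' (s i * s j) k, mul_inv_rev]
      simp [mul_assoc]
    · have hc1 : ((s i * s j) ^ k * w * ((s i * s j) ^ k)⁻¹ = s j)
          ↔ ((s i * s j) ^ (2 * k) * w = s j) := by
        have := conj_eq_iff cs i j w k 0
        simpa using this
      have hc2 : (s j * ((s i * s j) ^ k * w * ((s i * s j) ^ k)⁻¹) * s j = s i)
          ↔ ((s i * s j) ^ (2 * k + 1) * w = s j) := by
        rw [← conj_eq_iff cs i j w k 1]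
        constructor
        · intro hc
          have : (s i * s j) ^ k * w * ((s i * s j) ^ k)⁻¹
              = s j * s i * s j := by
            have := congrArg (fun z => s j * z * s j) hc
            rw [conj_simple_simple cs j] at this
            rw [this]
          rw [this, pow_one, ← hji]
        · intro hc
          rw [hc, pow_one, ← hji]
          calc s j * (s j * s i * s j) * s j = (s j * s j) * s i * (s j * s j) := by group
            _ = s i := by rw [cs.simple_mul_simple_self]; group
      have h2k : 2 * (k + 1) = (2 * k) + 1 + 1 := by ring
      rw [h2k, Finset.prod_range_succ, Finset.prod_range_succ]
      simp only [hc1, hc2]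
      simp [mul_assoc]

lemma sgnPerm_liftable : M.IsLiftable (fun i => sgnPerm cs i) := by
  intro i j
  ext ⟨w, ε⟩ : 1
  rw [Equiv.Perm.one_apply, sgnPerm_pow_apply]
  have hrel : (s i * s j) ^ M.M i j = 1 := cs.simple_mul_simple_pow i j
  rw [Prod.mk.injEq]
  constructor
  · rw [hrel]; group
  · have h2 : (2 * M.M i j) = M.M i j + M.M i j := by ring
    rw [h2, Finset.prod_range_add]
    have heq : ∀ r ∈ Finset.range (M.M i j),
        (if (s i * s j) ^ (M.M i j + r) * w = s j then (-1 : ℤˣ) else 1) =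
        (if (s i * s j) ^ r * w = s j then (-1 : ℤˣ) else 1) := by
      intro r _
      rw [pow_add, hrel, one_mul]
    rw [Finset.prod_congr rfl heq, Int.units_mul_self, mul_one]

/-- The sign representation `W →* Perm (W × ℤˣ)`. -/
def phi : W →* Equiv.Perm (W × ℤˣ) := cs.lift ⟨fun i => sgnPerm cs i, sgnPerm_liftable cs⟩

lemma phi_simple (i : I) : phi cs (s i) = sgnPerm cs i :=
  cs.lift_apply_simple (sgnPerm_liftable cs) i

lemma phi_wordProd_inv (ω : List I) (t : W) (ε : ℤˣ) :
    phi cs ((π ω)⁻¹) (t, ε) =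
      ((π ω)⁻¹ * t * π ω, ε * (-1) ^ ((cs.leftInvSeq ω).count t)) := by
  induction ω generalizing t ε with
  | nil => simp
  | cons i ω ih =>
    have hπ : (π (i :: ω))⁻¹ = (π ω)⁻¹ * s i := by
      rw [cs.wordProd_cons, mul_inv_rev, cs.inv_simple]
    rw [hπ, map_mul, Equiv.Perm.mul_apply, phi_simple, sgnPerm_apply]
    dsimp only
    rw [ih]
    have hlis : cs.leftInvSeq (i :: ω)
        = s i :: List.map (⇑(MulAut.conj (s i))) (cs.leftInvSeq ω) := rfl
    rw [Prod.mk.injEq]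
    constructor
    · rw [cs.wordProd_cons]
      group
    · rw [hlis]
      have hmap : (List.map (⇑(MulAut.conj (s i))) (cs.leftInvSeq ω)).count t =
          (cs.leftInvSeq ω).count (s i * t * s i) := by
        have htt : t = MulAut.conj (s i) (s i * t * s i) := by
          simp only [MulAut.conj_apply, cs.inv_simple]
          rw [conj_simple_simple cs i t]
        nth_rw 1 [htt]
        exact List.count_map_of_injective _ _ (MulAut.conj (s i)).injective _
      rw [List.count_cons, hmap]
      by_cases ht : t = s i
      · simp only [ht, if_pos rfl]
        simp [pow_add, mul_comm, mul_assoc, mul_left_comm]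
      · have hn : ¬ (s i = t) := fun hc => ht hc.symm
        simp [ht, hn]

end
end BedardAux

namespace Part2
open BedardAux
noncomputable section
open scoped Classical

variable (cs : CoxeterSystem M W)

local prefix:100 "s" => cs.simple
local prefix:100 "π" => cs.wordProd
local prefix:100 "ℓ" => cs.length

/-- Strong exchange for a simple left descent: `s i` occurs in the left
inversion sequence of any reduced word. -/
lemma simple_mem_leftInvSeq {ω : List I} (hω : cs.IsReduced ω) {i : I}
    (hlt : ℓ (s i * π ω) < ℓ (π ω)) : s i ∈ cs.leftInvSeq ω := by
  obtain ⟨ρ, hρred, hρ⟩ := cs.exists_reduced_word' (s i * π ω)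
  have hπ : π (i :: ρ) = π ω := by
    rw [cs.wordProd_cons, ← hρ, cs.simple_mul_simple_cancel_left]
  have h1 := phi_wordProd_inv cs ω (s i) 1
  have h2 := phi_wordProd_inv cs (i :: ρ) (s i) 1
  rw [hπ] at h2
  have hsnd : (1 : ℤˣ) * (-1) ^ ((cs.leftInvSeq ω).count (s i))
      = 1 * (-1) ^ ((cs.leftInvSeq (i :: ρ)).count (s i)) :=
    congrArg Prod.snd (h1.symm.trans h2)
  have hcnt0 : (cs.leftInvSeq ρ).count (s i) = 0 := by
    rw [List.count_eq_zero]
    intro hmem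
    have := (cs.isLeftInversion_of_mem_leftInvSeq hρred hmem).2
    rw [← hρ, cs.simple_mul_simple_cancel_left] at this
    omega
  have hlis : cs.leftInvSeq (i :: ρ)
      = s i :: List.map (⇑(MulAut.conj (s i))) (cs.leftInvSeq ρ) := rfl
  have hcnt1 : (cs.leftInvSeq (i :: ρ)).count (s i) = 1 := by
    rw [hlis, List.count_cons]
    have hmapcnt : (List.map (⇑(MulAut.conj (s i))) (cs.leftInvSeq ρ)).count (s i) = 0 := by
      rw [List.count_eq_zero]
      intro hmem
      obtain ⟨u, hu, huu⟩ := List.mem_map.mp hmem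
      have : u = s i := by
        have h' : s i * u * (s i)⁻¹ = s i := huu
        rw [cs.inv_simple] at h'
        have h'' := congrArg (fun z => s i * z * s i) h'
        rw [conj_simple_simple cs i u] at h''
        rw [h'', cs.simple_mul_simple_self, one_mul]
      rw [this] at hu
      rw [List.count_eq_zero] at hcnt0
      exact hcnt0 hu
    rw [hmapcnt]
    simp
  rw [hcnt1] at hsnd
  by_contra hmem
  have : (cs.leftInvSeq ω).count (s i) = 0 := List.count_eq_zero.mpr hmem
  rw [this] at hsnd
  simp at hsnd

/-- Exchange: a simple left descent can be exchanged against a letter of any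
reduced word. -/
lemma exchange {ω : List I} (hω : cs.IsReduced ω) {i : I}
    (hlt : ℓ (s i * π ω) < ℓ (π ω)) :
    ∃ j < ω.length, s i * π ω = π (ω.eraseIdx j) := by
  have hmem := simple_mem_leftInvSeq cs hω hlt
  obtain ⟨j, hj, hget⟩ := List.mem_iff_getElem.mp hmem
  rw [cs.length_leftInvSeq] at hj
  refine ⟨j, hj, ?_⟩
  rw [← cs.getD_leftInvSeq_mul_wordProd ω j]
  congr 1
  rw [← hget, List.getD_eq_getElem]

end
end Part2

namespace Part3
open BedardAux Part2
noncomputable section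
open scoped Classical

variable (cs : CoxeterSystem M W)

local prefix:100 "s" => cs.simple
local prefix:100 "π" => cs.wordProd
local prefix:100 "ℓ" => cs.length

lemma wordProd_mem_parab {J : Set I} {ω : List I} (hω : ∀ i ∈ ω, i ∈ J) :
    π ω ∈ parab cs J := by
  induction ω with
  | nil => rw [cs.wordProd_nil]; exact one_mem _
  | cons i ω ih =>
    rw [cs.wordProd_cons]
    refine mul_mem (Subgroup.subset_closure ⟨i, hω i List.mem_cons_self, rfl⟩) ?_
    exact ih (fun j hj => hω j (List.mem_cons_of_mem i hj))

lemma exists_word_of_mem_parab {J : Set I} {u : W} (hu : u ∈ parab cs J) :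
    ∃ ω : List I, (∀ i ∈ ω, i ∈ J) ∧ π ω = u := by
  refine Subgroup.closure_induction ?_ ?_ ?_ ?_ hu
  · rintro x ⟨i, hi, rfl⟩
    exact ⟨[i], by simpa using hi, by simp⟩
  · exact ⟨[], by simp, by simp⟩
  · rintro x y hx hy ⟨ω₁, h₁, rfl⟩ ⟨ω₂, h₂, rfl⟩
    refine ⟨ω₁ ++ ω₂, ?_, by rw [cs.wordProd_append]⟩
    intro i hi
    rcases List.mem_append.mp hi with h | h
    · exact h₁ i h
    · exact h₂ i h
  · rintro x hx ⟨ω, h₁, rfl⟩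
    exact ⟨ω.reverse, fun i hi => h₁ i (List.mem_reverse.mp hi), cs.wordProd_reverse ω⟩

lemma key_lemma {J : Set I} {w : W} (hw : MinLeft cs J w) :
    ∀ ω : List I, (∀ i ∈ ω, i ∈ J) →
      ∃ ω' : List I, (∀ i ∈ ω', i ∈ J) ∧ π ω' * w = π ω * w ∧
        ℓ (π ω * w) = ω'.length + ℓ w := by
  intro ω
  induction ω with
  | nil => exact fun _ => ⟨[], by simp, by simp, by simp⟩
  | cons i ω₁ hind =>
    intro hmem
    obtain ⟨ω₁', hmem', heq', hlen'⟩ := hind (fun j hj => hmem j (List.mem_cons_of_mem i hj))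
    have hiJ : i ∈ J := hmem i List.mem_cons_self
    have hcons : π (i :: ω₁) * w = s i * (π ω₁' * w) := by
      rw [cs.wordProd_cons, heq', mul_assoc]
    rcases cs.length_simple_mul (π ω₁' * w) i with hup | hdn
    · -- length goes up: prepend the letter
      refine ⟨i :: ω₁', ?_, ?_, ?_⟩
      · intro j hj
        rcases List.mem_cons.mp hj with h | h
        · exact h ▸ hiJ
        · exact hmem' j h
      · rw [cs.wordProd_cons, mul_assoc, heq', ← mul_assoc, ← cs.wordProd_cons]
      · rw [hcons, hup, heq', hlen']
        simp [List.length_cons]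
        ring
    · -- length goes down: use the exchange property
      obtain ⟨ρ, hρlen, hρ⟩ := cs.exists_reduced_word w
      have hρlen : ρ.length = ℓ w := by rw [hρ]; exact (show ℓ (π ρ) = ρ.length from hρlen).symm
      have hσprod : π (ω₁' ++ ρ) = π ω₁' * w := by
        rw [cs.wordProd_append, ← hρ]
      have hω1len : ℓ (π ω₁' * w) = ω₁'.length + ℓ w := by
        rw [heq']; exact hlen'
      have hσred : cs.IsReduced (ω₁' ++ ρ) := by
        unfold CoxeterSystem.IsReduced
        rw [hσprod, List.length_append, hρlen]
        exact hω1len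
      have hlt : ℓ (s i * π (ω₁' ++ ρ)) < ℓ (π (ω₁' ++ ρ)) := by
        rw [hσprod]; omega
      obtain ⟨j, hjlt, hjer⟩ := exchange cs hσred hlt
      by_cases hcase : j < ω₁'.length
      · -- erase within ω₁'
        rw [List.eraseIdx_append_of_lt_length hcase ρ] at hjer
        rw [cs.wordProd_append ω₁' ρ, cs.wordProd_append (ω₁'.eraseIdx j) ρ, ← hρ] at hjer
        refine ⟨ω₁'.eraseIdx j, ?_, ?_, ?_⟩
        · intro l hl
          exact hmem' l (List.mem_of_mem_eraseIdx hl)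
        · rw [hcons]
          exact hjer.symm
        · rw [hcons, hjer, List.length_eraseIdx_of_lt hcase]
          rw [← hjer]
          omega
      · -- erase within ρ: contradicts minimality of w
        exfalso
        push_neg at hcase
        rw [List.eraseIdx_append_of_length_le hcase ρ] at hjer
        rw [cs.wordProd_append ω₁' ρ, cs.wordProd_append ω₁' (ρ.eraseIdx (j - ω₁'.length)),
          ← hρ] at hjer
        have hu : (π ω₁')⁻¹ * s i * π ω₁' ∈ parab cs J := by
          refine mul_mem (mul_mem (inv_mem (wordProd_mem_parab cs hmem'))
            (Subgroup.subset_closure ⟨i, hiJ, rfl⟩)) (wordProd_mem_parab cs hmem')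
        have heq2 : ((π ω₁')⁻¹ * s i * π ω₁') * w = π (ρ.eraseIdx (j - ω₁'.length)) := by
          have h3 := congrArg (fun z => (π ω₁')⁻¹ * z) hjer
          rw [inv_mul_cancel_left] at h3
          rw [mul_assoc, mul_assoc]
          exact h3
        have hlenle : ℓ (((π ω₁')⁻¹ * s i * π ω₁') * w) < ℓ w := by
          rw [heq2]
          calc ℓ (π (ρ.eraseIdx (j - ω₁'.length)))
              ≤ (ρ.eraseIdx (j - ω₁'.length)).length := cs.length_wordProd_le _
            _ < ρ.length := by
                have hjρ : j - ω₁'.length < ρ.length := by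
                  rw [List.length_append] at hjlt
                  omega
                rw [List.length_eraseIdx_of_lt hjρ]
                omega
            _ = ℓ w := hρlen
        exact absurd (hw _ hu) (by omega)

lemma min_left_unique {J : Set I} {w u : W} (hw : MinLeft cs J w)
    (hu : u ∈ parab cs J) (hle : ℓ (u * w) ≤ ℓ w) : u * w = w := by
  obtain ⟨ω, hωJ, rfl⟩ := exists_word_of_mem_parab cs hu
  obtain ⟨ω', hω'J, heq, hlen⟩ := key_lemma cs hw ω hωJ
  have : ω'.length = 0 := by omega
  rw [List.length_eq_zero_iff] at this
  subst this
  rw [← heq, cs.wordProd_nil, one_mul]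

end
end Part3

end BedardMachinery

theorem bedard_seq_eventually_constant [Finite I]
    (cs : CoxeterSystem M W) (p : Equiv.Perm I) (δ : MulAut W)
    (hδ : ∀ i, δ (cs.simple i) = cs.simple (p i))
    (J : Set I) (Jseq : ℕ → Set I) (wseq : ℕ → W)
    (h : BedardSeq cs p J Jseq wseq) :
    ∃ m : ℕ, ∀ n, m ≤ n → Jseq n = Jseq m ∧ wseq n = wseq m := by
  obtain ⟨h0, hJrec, hminboth, hw⟩ := h
  have hmin : ∀ n, MinLeft cs (Jseq n) (wseq n) := fun n => (hminboth n).1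
  have hdec : ∀ n, Jseq (n + 1) ⊆ Jseq n := by
    intro n i hi
    rw [hJrec n] at hi
    exact hi.1
  have hchain : ∀ a b, a ≤ b → Jseq b ⊆ Jseq a := by
    intro a b hab
    obtain ⟨k, rfl⟩ := Nat.exists_eq_add_of_le hab
    clear hab
    induction k with
    | zero => simp
    | succ k ih => exact subset_trans (Nat.add_succ a k ▸ hdec (a + k)) ih
  obtain ⟨m, hm⟩ := Nat.sInf_mem (⟨(Jseq 0).ncard, 0, rfl⟩ :
    (Set.range (fun n => (Jseq n).ncard)).Nonempty)
  have hJconst : ∀ n, m ≤ n → Jseq n = Jseq m := by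
    intro n hn
    refine Set.eq_of_subset_of_ncard_le (hchain m n hn) ?_ (Set.toFinite _)
    have hle : sInf (Set.range fun n => (Jseq n).ncard) ≤ (Jseq n).ncard :=
      Nat.sInf_le ⟨n, rfl⟩
    simpa [← hm] using hle
  refine ⟨m, fun n hn => ⟨hJconst n hn, ?_⟩⟩
  induction n, hn using Nat.le_induction with
  | base => rfl
  | succ n hmn ih =>
    have hun : wseq (n + 1) * (wseq n)⁻¹ ∈ parab cs (Jseq n) := hw n
    have hminn : MinLeft cs (Jseq n) (wseq n) := hmin n
    have hminn1 : MinLeft cs (Jseq n) (wseq (n + 1)) := by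
      have h2 := hmin (n + 1)
      rwa [hJconst (n + 1) (le_trans hmn (Nat.le_succ n)), ← hJconst n hmn] at h2
    have hcancel : (wseq (n + 1) * (wseq n)⁻¹)⁻¹ * wseq (n + 1) = wseq n := by
      group
    have h1 : cs.length (wseq (n + 1)) ≤ cs.length (wseq n) := by
      have := hminn1 _ (inv_mem hun)
      rwa [hcancel] at this
    have h2 : (wseq (n + 1) * (wseq n)⁻¹) * wseq n = wseq (n + 1) := by group
    have h3 := Part3.min_left_unique cs hminn hun (by rw [h2]; exact h1)
    rw [h2] at h3
    rw [h3]
    exact ih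
end

section
/- With notation as in the construction of $(K_n, v_n)$ from $(J_n, w_n) \in \mathcal{T}(J,\delta)$: for every $n \geq 0$, $K_n = (\delta^n(v_0)\delta^{n-1}(v_1)\cdots\delta(v_{n-1}))^{-1} \delta^{n+1}(J_n)$. -/
/-!
Statement 2: for the sequence `(K_n, v_n)` associated to `(J_n, w_n) ∈ 𝓣(J, δ)`,
we have `K_n = (δⁿ(v₀) δ^{n-1}(v₁) ⋯ δ(v_{n-1}))⁻¹ δ^{n+1}(J_n)` for every `n`.
-/

open CoxeterSystem

variable {I W : Type*} [Group W] {M : CoxeterMatrix I}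

namespace BedardAux
open Real

variable {I : Type*} (M : CoxeterMatrix I)

noncomputable def kk (a b : I) : ℝ := - Real.cos (Real.pi / M a b)

lemma kk_diag (a : I) : kk M a a = 1 := by simp [kk, M.diagonal a]

lemma kk_symm (a b : I) : kk M b a = kk M a b := by rw [kk, kk, M.symmetric]

noncomputable def lf (a : I) : (I →₀ ℝ) →ₗ[ℝ] ℝ :=
  Finsupp.linearCombination ℝ (fun b => kk M a b)

lemma lf_single (a b : I) (r : ℝ) : lf M a (Finsupp.single b r) = r * kk M a b := by
  simp [lf, Finsupp.linearCombination_single]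

noncomputable def rf (a : I) (v : I →₀ ℝ) : I →₀ ℝ :=
  v - (2 * lf M a v) • Finsupp.single a (1:ℝ)

lemma rf_invol (a : I) : Function.Involutive (rf M a) := by
  intro v
  unfold rf
  simp only [map_sub, map_smul, lf_single, smul_eq_mul, mul_one, kk_diag]
  module

lemma rf_step (a b : I) (v : I →₀ ℝ) (p q : ℝ) :
    rf M a (rf M b (v + p • Finsupp.single a (1:ℝ) + q • Finsupp.single b (1:ℝ)))
    = v + ((4*(kk M a b)^2 - 1)*p + 2*(kk M a b)*q - 2*(lf M a v) + 4*(kk M a b)*(lf M b v))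
          • Finsupp.single a (1:ℝ)
      + (-q - 2*(kk M a b)*p - 2*(lf M b v)) • Finsupp.single b (1:ℝ) := by
  unfold rf
  simp only [map_add, map_sub, map_smul, lf_single, smul_eq_mul, mul_one, kk_diag, kk_symm]
  module

lemma scalar1 (s c S C x y : ℝ) (hs : s ≠ 0) (h : s^2 + c^2 = 1) :
    (-(y*s)*(S*(2*c^2-1) - 2*s*c*C) + (x - c*y)*((C*(2*c^2-1) + 2*s*c*S) - 1))/s^2
    = (4*c^2-1)*((-(y*s)*S + (x-c*y)*(C-1))/s^2)
      + 2*c*((x*s*S + (y-c*x)*(C-1))/s^2) - 2*x + 4*c*y := by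
  have key : (-(y*s)*(S*(2*c^2-1) - 2*s*c*C) + (x - c*y)*((C*(2*c^2-1) + 2*s*c*S) - 1))
      = (4*c^2-1)*(-(y*s)*S + (x-c*y)*(C-1)) + 2*c*(x*s*S + (y-c*x)*(C-1))
        + (-2*x + 4*c*y)*s^2 := by
    linear_combination (2*x - 4*c*y + 2*c*C*y) * h
  rw [key]; field_simp; ring

lemma scalar2 (s c S C x y : ℝ) (hs : s ≠ 0) (h : s^2 + c^2 = 1) :
    (x*s*(S*(2*c^2-1) - 2*s*c*C) + (y - c*x)*((C*(2*c^2-1) + 2*s*c*S) - 1))/s^2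
    = -((x*s*S + (y-c*x)*(C-1))/s^2)
      - 2*c*((-(y*s)*S + (x-c*y)*(C-1))/s^2) - 2*y := by
  have key : (x*s*(S*(2*c^2-1) - 2*s*c*C) + (y - c*x)*((C*(2*c^2-1) + 2*s*c*S) - 1))
      = -(x*s*S + (y-c*x)*(C-1)) - 2*c*(-(y*s)*S + (x-c*y)*(C-1)) - 2*y*s^2 := by
    linear_combination (2*y - 2*c*C*x) * h
  rw [key]; field_simp

lemma rf_order (a b : I) (m : ℕ) (hm : M a b = m) (hm2 : 2 ≤ m) (v : I →₀ ℝ) :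
    (rf M a ∘ rf M b)^[m] v = v := by
  set θ : ℝ := Real.pi / (m:ℝ) with hθ_def
  have hm0 : (0:ℝ) < (m:ℝ) := by
    have : 0 < m := lt_of_lt_of_le (by norm_num) hm2
    exact_mod_cast this
  have hθpos : 0 < θ := div_pos Real.pi_pos hm0
  have hθlt : θ < Real.pi := by
    rw [hθ_def]
    apply div_lt_self Real.pi_pos
    exact_mod_cast lt_of_lt_of_le (by norm_num) hm2
  set s : ℝ := Real.sin θ with hs_def
  have hs : s ≠ 0 := ne_of_gt (Real.sin_pos_of_pos_of_lt_pi hθpos hθlt)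
  set c : ℝ := kk M a b with hc_def
  have hc : Real.cos θ = -c := by
    rw [hc_def, kk, hm]; ring
  have hpyth : s^2 + c^2 = 1 := by
    have h1 := Real.sin_sq_add_cos_sq θ
    rw [hc] at h1
    linear_combination h1
  set x : ℝ := lf M a v with hx_def
  set y : ℝ := lf M b v with hy_def
  have key : ∀ j : ℕ, (rf M a ∘ rf M b)^[j] v
      = v + ((-(y*s)*Real.sin (2*(j:ℝ)*θ) + (x - c*y)*(Real.cos (2*(j:ℝ)*θ) - 1))/s^2)
              • Finsupp.single a (1:ℝ)
          + ((x*s*Real.sin (2*(j:ℝ)*θ) + (y - c*x)*(Real.cos (2*(j:ℝ)*θ) - 1))/s^2)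
              • Finsupp.single b (1:ℝ) := by
    intro j
    induction j with
    | zero => norm_num
    | succ j ih =>
      have hsin : Real.sin (2*((j+1:ℕ):ℝ)*θ)
          = Real.sin (2*(j:ℝ)*θ)*(2*c^2-1) - 2*s*c*Real.cos (2*(j:ℝ)*θ) := by
        have h1 : 2*((j+1:ℕ):ℝ)*θ = 2*(j:ℝ)*θ + 2*θ := by push_cast; ring
        rw [h1, Real.sin_add, Real.sin_two_mul, Real.cos_two_mul, hc]
        ring
      have hcos : Real.cos (2*((j+1:ℕ):ℝ)*θ)
          = Real.cos (2*(j:ℝ)*θ)*(2*c^2-1) + 2*s*c*Real.sin (2*(j:ℝ)*θ) := by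
        have h1 : 2*((j+1:ℕ):ℝ)*θ = 2*(j:ℝ)*θ + 2*θ := by push_cast; ring
        rw [h1, Real.cos_add, Real.sin_two_mul, Real.cos_two_mul, hc]
        ring
      have hP : (-(y*s)*Real.sin (2*((j+1:ℕ):ℝ)*θ)
            + (x - c*y)*(Real.cos (2*((j+1:ℕ):ℝ)*θ) - 1))/s^2
          = (4*c^2-1)*((-(y*s)*Real.sin (2*(j:ℝ)*θ) + (x-c*y)*(Real.cos (2*(j:ℝ)*θ)-1))/s^2)
            + 2*c*((x*s*Real.sin (2*(j:ℝ)*θ) + (y-c*x)*(Real.cos (2*(j:ℝ)*θ)-1))/s^2)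
            - 2*x + 4*c*y := by
        rw [hsin, hcos]
        exact scalar1 s c _ _ x y hs hpyth
      have hQ : (x*s*Real.sin (2*((j+1:ℕ):ℝ)*θ)
            + (y - c*x)*(Real.cos (2*((j+1:ℕ):ℝ)*θ) - 1))/s^2
          = -((x*s*Real.sin (2*(j:ℝ)*θ) + (y-c*x)*(Real.cos (2*(j:ℝ)*θ)-1))/s^2)
            - 2*c*((-(y*s)*Real.sin (2*(j:ℝ)*θ) + (x-c*y)*(Real.cos (2*(j:ℝ)*θ)-1))/s^2)
            - 2*y := by
        rw [hsin, hcos]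
        exact scalar2 s c _ _ x y hs hpyth
      rw [Function.iterate_succ_apply', ih]
      show rf M a (rf M b _) = _
      rw [rf_step, hP, hQ, ← hc_def, ← hx_def, ← hy_def]
  have h2pi : 2*((m:ℕ):ℝ)*θ = 2*Real.pi := by
    rw [hθ_def]; field_simp
  rw [key m, h2pi, Real.sin_two_pi, Real.cos_two_pi]
  norm_num

lemma liftable : M.IsLiftable (fun a => (rf_invol M a).toPerm) := by
  intro a b
  rcases eq_or_ne a b with rfl | hab
  · rw [M.diagonal a, pow_one]
    apply Equiv.ext; intro v
    exact rf_invol M a v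
  · obtain h0 | h2 : M a b = 0 ∨ 2 ≤ M a b := by
      have := M.off_diagonal a b hab
      omega
    · rw [h0, pow_zero]
    · ext v
      have h1 : (((rf_invol M a).toPerm * (rf_invol M b).toPerm) ^ M a b) v
          = (rf M a ∘ rf M b)^[M a b] v := by
        rw [show ⇑(((rf_invol M a).toPerm * (rf_invol M b).toPerm) ^ M a b)
            = (rf M a ∘ rf M b)^[M a b] from by rw [Equiv.Perm.coe_pow]; rfl]
      rw [h1, rf_order M a b (M a b) rfl h2 v]
      rfl

theorem simple_injective {W : Type*} [Group W] (cs : CoxeterSystem M W) :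
    Function.Injective cs.simple := by
  intro i j hij
  by_contra hne
  have h1 : (rf_invol M i).toPerm = (rf_invol M j).toPerm := by
    have a1 := cs.lift_apply_simple (liftable M) i
    have a2 := cs.lift_apply_simple (liftable M) j
    rw [hij] at a1
    exact a1.symm.trans a2
  have h2 : rf M i (Finsupp.single j 1) = rf M j (Finsupp.single j 1) := by
    have := congrFun (congrArg (fun (e : Equiv.Perm (I →₀ ℝ)) => ⇑e) h1) (Finsupp.single j 1)
    simpa using this
  have h3 := congrArg (fun w : I →₀ ℝ => w j) h2
  simp only [rf, lf_single, one_mul, Finsupp.sub_apply, Finsupp.smul_apply,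
    Finsupp.single_eq_same, Finsupp.single_eq_of_ne (Ne.symm hne), kk_diag, smul_eq_mul,
    mul_zero, mul_one, sub_zero] at h3
  norm_num at h3

end BedardAux

theorem associated_seq_Kn_formula
    (cs : CoxeterSystem M W) (p : Equiv.Perm I) (δ : MulAut W)
    (hδ : ∀ i, δ (cs.simple i) = cs.simple (p i))
    (J : Set I) (Jseq : ℕ → Set I) (wseq : ℕ → W)
    (hJw : BedardSeq cs p J Jseq wseq)
    (Kseq : ℕ → Set I) (vseq : ℕ → W)
    -- the auxiliary products `A n = δⁿ(v₀) δ^{n-1}(v₁) ⋯ δ(v_{n-1})`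
    (A : ℕ → W) (hA0 : A 0 = 1) (hA : ∀ n, A (n + 1) = δ (A n * vseq n))
    -- `v_n = (δⁿ(v₀) ⋯ δ(v_{n-1}))⁻¹ δⁿ(w_n⁻¹) (δ^{n-1}(v₀) ⋯ v_{n-1})`
    (hv : ∀ n, vseq n = (A n)⁻¹ * ((δ ^ n) (wseq n))⁻¹ * δ⁻¹ (A n))
    -- `K₀ = δ(J)` and `K_n = K_{n-1} ∩ δ(v_{n-1}⁻¹ K_{n-1})`
    (hK0 : Kseq 0 = p '' J)
    (hK : ∀ n, Kseq (n + 1) =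
      {i | i ∈ Kseq n ∧ ∃ j ∈ Kseq n,
        (vseq n)⁻¹ * cs.simple j * vseq n = cs.simple (p.symm i)}) :
    ∀ n, Kseq n = {i | ∃ j ∈ Jseq n,
      cs.simple i = (A n)⁻¹ * cs.simple ((p ^ (n + 1)) j) * A n} := by
  obtain ⟨hJ0, hJ, -, -⟩ := hJw
  have hinj : Function.Injective cs.simple := BedardAux.simple_injective M cs
  have hsim : ∀ (k : ℕ) (i : I), (δ ^ k) (cs.simple i) = cs.simple ((p ^ k) i) := by
    intro k
    induction k with
    | zero => intro i; simp
    | succ k ihk =>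
      intro i
      rw [pow_succ, MulAut.mul_apply, hδ, ihk, ← Equiv.Perm.mul_apply, ← pow_succ]
  have hδsucc : ∀ (k : ℕ) (u : W), δ ((δ ^ k) u) = (δ ^ (k + 1)) u := by
    intro k u; rw [pow_succ', MulAut.mul_apply]
  have happly : ∀ u : W, δ (δ⁻¹ u) = u := fun u => MulAut.apply_inv_self W δ u
  have hconj : ∀ (u aa g : W),
      δ ((aa⁻¹ * u⁻¹ * δ⁻¹ aa)⁻¹ * (aa⁻¹ * g * aa) * (aa⁻¹ * u⁻¹ * δ⁻¹ aa))
        = aa⁻¹ * (δ u * δ g * (δ u)⁻¹) * aa := by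
    intro u aa g
    simp only [map_mul, map_inv, happly]
    group
  suffices h : ∀ n, (Kseq n = {i | ∃ j ∈ Jseq n,
      cs.simple i = (A n)⁻¹ * cs.simple ((p ^ (n + 1)) j) * A n})
      ∧ ∀ j ∈ Jseq n, ∃ i, cs.simple i = (A n)⁻¹ * cs.simple ((p ^ (n + 1)) j) * A n by
    exact fun n => (h n).1
  intro n
  induction n with
  | zero =>
    constructor
    · rw [hK0, hA0, hJ0]
      ext i
      simp only [Set.mem_image, Set.mem_setOf_eq, inv_one, one_mul, mul_one, zero_add, pow_one]
      constructor
      · rintro ⟨j, hj, rfl⟩; exact ⟨j, hj, rfl⟩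
      · rintro ⟨j, hj, hji⟩; exact ⟨j, hj, (hinj hji).symm⟩
    · intro j hj
      refine ⟨p j, ?_⟩
      rw [hA0]
      simp only [zero_add, pow_one, inv_one, one_mul, mul_one]
  | succ n ih =>
    obtain ⟨ihK, ihS⟩ := ih
    have hidx : ∀ mm : I, p ((p ^ (n + 1)) mm) = (p ^ (n + 1 + 1)) mm := by
      intro mm; rw [← Equiv.Perm.mul_apply, ← pow_succ']
    have hidx2 : ∀ mm : I, (p ^ (n + 1)) (p mm) = (p ^ (n + 1 + 1)) mm := by
      intro mm; rw [← Equiv.Perm.mul_apply, ← pow_succ]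
    have hA1 : A (n + 1) = ((δ ^ (n + 1)) (wseq n))⁻¹ * A n := by
      rw [hA n, hv n]
      rw [show A n * ((A n)⁻¹ * ((δ ^ n) (wseq n))⁻¹ * δ⁻¹ (A n))
          = ((δ ^ n) (wseq n))⁻¹ * δ⁻¹ (A n) from by group]
      rw [map_mul, map_inv, hδsucc n, happly]
    have hstep : ∀ (mm : I) (g : W), g = (A n)⁻¹ * cs.simple ((p ^ (n + 1)) mm) * A n →
        δ ((vseq n)⁻¹ * g * vseq n)
          = (A n)⁻¹ * ((δ ^ (n + 1)) (wseq n) * cs.simple ((p ^ (n + 1 + 1)) mm)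
              * ((δ ^ (n + 1)) (wseq n))⁻¹) * A n := by
      intro mm g hg
      rw [hg, hv n, hconj ((δ ^ n) (wseq n)) (A n) (cs.simple ((p ^ (n + 1)) mm))]
      rw [hδsucc n (wseq n), hδ ((p ^ (n + 1)) mm), hidx mm]
    have hkey : ∀ (k j : I), (wseq n)⁻¹ * cs.simple k * wseq n = cs.simple (p j) →
        (A (n + 1))⁻¹ * cs.simple ((p ^ (n + 1 + 1)) j) * A (n + 1)
          = (A n)⁻¹ * cs.simple ((p ^ (n + 1)) k) * A n := by
      intro k j hkj
      have h5 : cs.simple ((p ^ (n + 1)) k)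
          = (δ ^ (n + 1)) (wseq n) * cs.simple ((p ^ (n + 1 + 1)) j)
            * ((δ ^ (n + 1)) (wseq n))⁻¹ := by
        rw [← hsim (n + 1) k,
          show cs.simple k = wseq n * cs.simple (p j) * (wseq n)⁻¹ from by rw [← hkj]; group,
          map_mul, map_mul, map_inv, hsim (n + 1) (p j), hidx2 j]
      rw [hA1, h5]
      group
    constructor
    · ext i
      constructor
      · intro hi
        rw [hK n] at hi
        obtain ⟨hiK, j', hj'K, hcj⟩ := hi
        rw [ihK] at hiK hj'K
        obtain ⟨k, hkJ, hik⟩ := hiK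
        obtain ⟨mm, hmJ, hj'm⟩ := hj'K
        have h1 := hstep mm (cs.simple j') hj'm
        rw [hcj, hδ, Equiv.apply_symm_apply, hik] at h1
        have h3 : cs.simple ((p ^ (n + 1)) k)
            = (δ ^ (n + 1)) (wseq n) * cs.simple ((p ^ (n + 1 + 1)) mm)
              * ((δ ^ (n + 1)) (wseq n))⁻¹ :=
          mul_left_cancel (mul_right_cancel h1)
        have h4 : (wseq n)⁻¹ * cs.simple k * wseq n = cs.simple (p mm) := by
          have h5 : (δ ^ (n + 1)) (cs.simple k)
              = (δ ^ (n + 1)) (wseq n * cs.simple (p mm) * (wseq n)⁻¹) := by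
            rw [hsim (n + 1) k, h3, map_mul, map_mul, map_inv, hsim (n + 1) (p mm), hidx2 mm]
          have h6 := MulEquiv.injective _ h5
          rw [h6]; group
        refine ⟨mm, ?_, ?_⟩
        · rw [hJ n]; exact ⟨hmJ, k, hkJ, h4⟩
        · rw [hik, ← hkey k mm h4]
      · intro hi
        obtain ⟨mm, hmJ1, him⟩ := hi
        have hmJ1' := hmJ1
        rw [hJ n] at hmJ1'
        obtain ⟨hmJ, k, hkJ, hkm⟩ := hmJ1'
        have heq : cs.simple i = (A n)⁻¹ * cs.simple ((p ^ (n + 1)) k) * A n := by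
          rw [him, hkey k mm hkm]
        obtain ⟨j', hj'⟩ := ihS mm hmJ
        rw [hK n]
        refine ⟨?_, j', ?_, ?_⟩
        · rw [ihK]; exact ⟨k, hkJ, heq⟩
        · rw [ihK]; exact ⟨mm, hmJ, hj'⟩
        · apply MulEquiv.injective δ
          rw [hstep mm (cs.simple j') hj', hδ, Equiv.apply_symm_apply, heq]
          have h5 : cs.simple ((p ^ (n + 1)) k)
              = (δ ^ (n + 1)) (wseq n) * cs.simple ((p ^ (n + 1 + 1)) mm)
                * ((δ ^ (n + 1)) (wseq n))⁻¹ := by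
            rw [← hsim (n + 1) k,
              show cs.simple k = wseq n * cs.simple (p mm) * (wseq n)⁻¹ from by
                rw [← hkm]; group,
              map_mul, map_mul, map_inv, hsim (n + 1) (p mm), hidx2 mm]
          rw [← h5]
    · intro j hj
      rw [hJ n] at hj
      obtain ⟨hjJ, k, hk, hkj⟩ := hj
      obtain ⟨i, hi⟩ := ihS k hk
      exact ⟨i, by rw [hkey k j hkj]; exact hi⟩
end

section
/- Let $W$ be a Weyl group acting on the root lattice, $J \subset I$, $w \in W^{\delta(J)}$ for a diagram automorphism $\delta$, and $K = I(J,w,\delta)$. If $\alpha$ is a root such that $(w\delta)^n\alpha \in \Phi_J^+$ for all $n \geq 0$, then $\alpha \in \Phi_K^+$. -/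
/-!
Statement 8: if `α` is a root with `(wδ)ⁿ α ∈ Φ_J⁺` for all `n ≥ 0`, where
`w ∈ W^{δ(J)}` and `K = I(J,w,δ)`, then `α ∈ Φ_K⁺`.  (Since the Weyl group is
finite, `wδ` has finite order on the root lattice.)

The root lattice of the Weyl group is modelled as `I →₀ ℤ`, with the simple
root `α_i = single i 1`, and the action of `W` on the root lattice is a
homomorphism `ρ : W →* AddAut (I →₀ ℤ)` satisfying the standard length
criterion: `ℓ(w sᵢ) = ℓ(w) + 1` iff `w(αᵢ) > 0`.
-/

open CoxeterSystem

variable {I W : Type*} [Group W] {M : CoxeterMatrix I}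

/-- The multiplicative group structure that `AddAut` carried in the older Mathlib
(composition, `g * h = h.trans g`); it is now an additive group. -/
instance addAutGroupOfOldMathlib (A : Type*) [Add A] : Group (AddAut A) where
  mul g h := AddEquiv.trans h g
  one := AddEquiv.refl _
  inv := AddEquiv.symm
  mul_assoc _ _ _ := rfl
  one_mul _ := rfl
  mul_one _ := rfl
  inv_mul_cancel := AddEquiv.self_trans_symm

/-- Positivity in the root lattice. -/
def IsPosV {I : Type*} (x : I →₀ ℤ) : Prop := x ≠ 0 ∧ ∀ i, 0 ≤ x i

/-- The set of roots: the orbit of the simple roots under `W`. -/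
def Phi (ρ : W →* AddAut (I →₀ ℤ)) : Set (I →₀ ℤ) :=
  {x | ∃ (w : W) (i : I), x = ρ w (Finsupp.single i 1)}

/-- `Φ_J`: the roots lying in the span of the simple roots indexed by `J`. -/
def PhiJ (ρ : W →* AddAut (I →₀ ℤ)) (J : Set I) : Set (I →₀ ℤ) :=
  {x ∈ Phi ρ | ∀ i, x i ≠ 0 → i ∈ J}

/-- `Φ_J⁺ = Φ_J ∩ Φ⁺`. -/
def PhiJPos (ρ : W →* AddAut (I →₀ ℤ)) (J : Set I) : Set (I →₀ ℤ) :=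
  {x ∈ PhiJ ρ J | IsPosV x}

/-- The action of a diagram automorphism (given by the permutation `p` of `I`)
on the root lattice. -/
def dmap (p : Equiv.Perm I) : (I →₀ ℤ) → (I →₀ ℤ) :=
  Finsupp.equivMapDomain p

/-- `K ⊆ J` satisfies `w δ(K) = K`: `w` maps `{α_{δ(k)} : k ∈ K}` bijectively
to `{α_k : k ∈ K}`. -/
def IsStabR (ρ : W →* AddAut (I →₀ ℤ)) (p : Equiv.Perm I)
    (J : Set I) (w : W) (K : Set I) : Prop :=
  K ⊆ J ∧ ∀ k ∈ K, ∃ k' ∈ K, ρ w (Finsupp.single (p k) 1) = Finsupp.single k' 1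

/-- `I(J, w, δ)`: the union of all `K ⊆ J` with `w δ(K) = K`. -/
def IsetR (ρ : W →* AddAut (I →₀ ℤ)) (p : Equiv.Perm I)
    (J : Set I) (w : W) : Set I :=
  {i | ∃ K, IsStabR ρ p J w K ∧ i ∈ K}

-- aux lemma: nonneg coords summing to 1 means it's a single
lemma exists_single_of_sum_eq_one {I : Type*} [Fintype I] [DecidableEq I]
    (x : I →₀ ℤ) (hpos : ∀ i, 0 ≤ x i) (hsum : ∑ i, x i = 1) :
    ∃ i, x = Finsupp.single i 1 := by
  have h1 : ∃ i, 0 < x i := by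
    by_contra h
    push_neg at h
    have hz : ∀ i ∈ Finset.univ, x i = 0 := fun i _ => le_antisymm (h i) (hpos i)
    rw [Finset.sum_eq_zero hz] at hsum
    exact one_ne_zero hsum.symm
  obtain ⟨i, hi⟩ := h1
  have hsplit : x i + ∑ j ∈ Finset.univ.erase i, x j = 1 := by
    rw [Finset.add_sum_erase _ _ (Finset.mem_univ i)]; exact hsum
  have hrest : 0 ≤ ∑ j ∈ Finset.univ.erase i, x j :=
    Finset.sum_nonneg fun j _ => hpos j
  have hxi : x i = 1 := by omega
  have hzero : ∀ j ∈ Finset.univ.erase i, x j = 0 := by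
    intro j hj
    have : ∑ j ∈ Finset.univ.erase i, x j = 0 := by omega
    exact (Finset.sum_eq_zero_iff_of_nonneg fun j _ => hpos j).mp this j hj
  refine ⟨i, Finsupp.ext fun j => ?_⟩
  rcases eq_or_ne j i with rfl | hne
  · simp [hxi]
  · rw [Finsupp.single_apply, if_neg (by exact fun h => hne h.symm)]
    exact hzero j (Finset.mem_erase.mpr ⟨hne, Finset.mem_univ j⟩)

lemma finite_order_T {I W : Type*} [Finite I] [Finite W] [Group W]
    (ρ : W →* AddAut (I →₀ ℤ)) (p : Equiv.Perm I) (δ : MulAut W)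
    (hδρ : ∀ (w : W) (x : I →₀ ℤ), dmap p (ρ w x) = ρ (δ w) (dmap p x))
    (w : W) (T : (I →₀ ℤ) ≃+ (I →₀ ℤ)) (hT : ∀ x, T x = ρ w (dmap p x)) :
    ∃ m : ℕ, 0 < m ∧ ∀ x, (⇑T)^[m] x = x := by
  classical
  cases nonempty_fintype I
  cases nonempty_fintype W
  set N := orderOf p with hN
  have hN0 : 0 < N := orderOf_pos p
  have key : ∀ n : ℕ, ∃ (u : W) (k : Fin N), (⇑T)^[n] = fun x => ρ u (dmap (p ^ (k : ℕ)) x) := by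
    intro n
    induction n with
    | zero =>
      refine ⟨1, ⟨0, hN0⟩, ?_⟩
      funext x
      show x = ρ 1 (Finsupp.equivMapDomain (p ^ 0) x)
      rw [pow_zero, show (1 : Equiv.Perm I) = Equiv.refl I from rfl,
        Finsupp.equivMapDomain_refl, map_one]
      rfl
    | succ n ih =>
      obtain ⟨u, k, hk⟩ := ih
      refine ⟨w * δ u, ⟨(k + 1) % N, Nat.mod_lt _ hN0⟩, ?_⟩
      funext x
      rw [Function.iterate_succ_apply', hk, hT]
      have h1 : dmap p (ρ u (dmap (p ^ (k : ℕ)) x)) = ρ (δ u) (dmap (p ^ ((k : ℕ) + 1)) x) := by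
        rw [hδρ]
        congr 1
        show Finsupp.equivMapDomain p (Finsupp.equivMapDomain (p ^ (k : ℕ)) x) = _
        rw [← Finsupp.equivMapDomain_trans]
        congr 1
        rw [pow_succ']
        rfl
      rw [h1, map_mul]
      have h2 : p ^ (((k : ℕ) + 1) % N) = p ^ ((k : ℕ) + 1) := pow_mod_orderOf ..
      rw [h2]
      rfl
  let F : W × Fin N → ((I →₀ ℤ) → (I →₀ ℤ)) := fun uk => fun x => ρ uk.1 (dmap (p ^ (uk.2 : ℕ)) x)
  have hsub : ∀ n : ℕ, (⇑T)^[n] ∈ Set.range F := by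
    intro n; obtain ⟨u, k, hk⟩ := key n; exact ⟨(u, k), hk.symm⟩
  have hex : ∃ m n : ℕ, m ≠ n ∧ (⇑T)^[m] = (⇑T)^[n] := by
    have := Finite.exists_ne_map_eq_of_infinite
      (fun n : ℕ => (⟨(⇑T)^[n], hsub n⟩ : Set.range F))
    obtain ⟨m, n, hmn, h⟩ := this
    exact ⟨m, n, hmn, congrArg Subtype.val h⟩
  obtain ⟨m, n, hmn, h⟩ := hex
  rcases Nat.lt_or_ge m n with hlt | hge
  · refine ⟨n - m, by omega, fun x => ?_⟩
    have : (⇑T)^[m] ((⇑T)^[n - m] x) = (⇑T)^[m] x := by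
      rw [← Function.iterate_add_apply, Nat.add_sub_cancel' (le_of_lt hlt), h]
    exact (T.injective.iterate m) this
  · have hlt : n < m := by omega
    refine ⟨m - n, by omega, fun x => ?_⟩
    have : (⇑T)^[n] ((⇑T)^[m - n] x) = (⇑T)^[n] x := by
      rw [← Function.iterate_add_apply, Nat.add_sub_cancel' (le_of_lt hlt), ← h]
    exact (T.injective.iterate n) this

theorem iterates_pos_mem_PhiK [Finite I] [Finite W]
    (cs : CoxeterSystem M W) (ρ : W →* AddAut (I →₀ ℤ))
    (hlen : ∀ (w : W) (i : I),
      cs.length (w * cs.simple i) = cs.length w + 1 ↔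
        IsPosV (ρ w (Finsupp.single i 1)))
    (hsi : ∀ i : I, ρ (cs.simple i) (Finsupp.single i 1) = -Finsupp.single i 1)
    -- the diagram automorphism δ
    (p : Equiv.Perm I) (δ : MulAut W)
    (hδs : ∀ i, δ (cs.simple i) = cs.simple (p i))
    (hδρ : ∀ (w : W) (x : I →₀ ℤ),
      dmap p (ρ w x) = ρ (δ w) (dmap p x))
    (J : Set I) (w : W) (hw : MinRight cs (p '' J) w)
    (a : I →₀ ℤ)
    (ha : ∀ n : ℕ, (fun x => ρ w (dmap p x))^[n] a ∈ PhiJPos ρ J) :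
    a ∈ PhiJPos ρ (IsetR ρ p J w) := by
  classical
  cases nonempty_fintype I
  set T : (I →₀ ℤ) ≃+ (I →₀ ℤ) := (Finsupp.domCongr p).trans (ρ w : (I →₀ ℤ) ≃+ (I →₀ ℤ))
    with hTdef
  have hTfun : ∀ x, T x = ρ w (dmap p x) := fun x => rfl
  have ha' : ∀ n, (⇑T)^[n] a ∈ PhiJPos ρ J := by
    intro n
    have h := ha n
    have : (fun x => ρ w (dmap p x)) = ⇑T := rfl
    rwa [this] at h
  obtain ⟨m, hm0, hmx⟩ := finite_order_T ρ p δ hδρ w T hTfun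
  -- positivity of w(α_{p j}) for j ∈ J
  have hposγ : ∀ j, j ∈ J → IsPosV (ρ w (Finsupp.single (p j) 1)) := by
    intro j hj
    have hmem : cs.simple (p j) ∈ parab cs (p '' J) :=
      Subgroup.subset_closure ⟨p j, ⟨j, hj, rfl⟩, rfl⟩
    have hle := hw _ hmem
    rcases cs.length_mul_simple w (p j) with h | h
    · exact (hlen w (p j)).1 h
    · omega
  -- the invariant vector β
  set β : I →₀ ℤ := ∑ n ∈ Finset.range m, (⇑T)^[n] a with hβdef
  have hβapp : ∀ i, β i = ∑ n ∈ Finset.range m, ((⇑T)^[n] a) i := by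
    intro i
    rw [hβdef, Finsupp.finset_sum_apply]
  have htermpos : ∀ n i, (0:ℤ) ≤ ((⇑T)^[n] a) i := fun n i => (ha' n).2.2 i
  have hβpos : ∀ i, 0 ≤ β i := fun i => by
    rw [hβapp]; exact Finset.sum_nonneg fun n _ => htermpos n i
  have hβJ : ∀ i, β i ≠ 0 → i ∈ J := by
    intro i hi
    by_contra hiJ
    apply hi
    rw [hβapp]
    refine Finset.sum_eq_zero fun n _ => ?_
    by_contra h
    exact hiJ ((ha' n).1.2 i h)
  have haβ : ∀ i, a i ≠ 0 → β i ≠ 0 := by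
    intro i hi
    have h0 : 0 < a i := lt_of_le_of_ne (htermpos 0 i) (Ne.symm hi)
    have hle : a i ≤ β i := by
      rw [hβapp]
      exact Finset.single_le_sum (fun n _ => htermpos n i) (Finset.mem_range.mpr hm0)
    omega
  -- T β = β
  have hTβ : T β = β := by
    rw [hβdef, map_sum]
    have h1 : ∀ n ∈ Finset.range m, T ((⇑T)^[n] a) = (⇑T)^[n+1] a :=
      fun n _ => (Function.iterate_succ_apply' _ _ _).symm
    rw [Finset.sum_congr rfl h1]
    have h2 := Finset.sum_range_succ' (fun n => (⇑T)^[n] a) m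
    have h3 := Finset.sum_range_succ (fun n => (⇑T)^[n] a) m
    have hfm : (⇑T)^[m] a = a := hmx a
    have h4 : (∑ n ∈ Finset.range m, (⇑T)^[n+1] a) + a
        = (∑ n ∈ Finset.range m, (⇑T)^[n] a) + a := by
      have h0a : (⇑T)^[0] a = a := rfl
      rw [← h0a]
      nth_rewrite 1 [h0a]
      rw [← h2, h3, hfm, h0a]
    exact add_right_cancel h4
  -- height function
  set ht : (I →₀ ℤ) → ℤ := fun x => ∑ i, x i with hhtdef
  have hht_single : ∀ (j : I), ht (Finsupp.single j (1:ℤ)) = 1 := by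
    intro j
    simp [hhtdef, Finsupp.single_apply]
  have hht_sum : ∀ (S : Finset I) (f : I → I →₀ ℤ),
      ht (∑ s ∈ S, f s) = ∑ s ∈ S, ht (f s) := by
    intro S f
    simp only [hhtdef, Finsupp.finset_sum_apply]
    exact Finset.sum_comm
  have hht_smul : ∀ (c : ℤ) (x : I →₀ ℤ), ht (c • x) = c * ht x := by
    intro c x
    simp [hhtdef, Finsupp.smul_apply, smul_eq_mul, Finset.mul_sum]
  have hht_ge : ∀ x : I →₀ ℤ, IsPosV x → 1 ≤ ht x := by
    intro x hx
    obtain ⟨i, hi⟩ : ∃ i, x i ≠ 0 := by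
      by_contra h
      push_neg at h
      exact hx.1 (Finsupp.ext h)
    have h1 : 1 ≤ x i := lt_of_le_of_ne (hx.2 i) (Ne.symm hi)
    calc (1:ℤ) ≤ x i := h1
      _ ≤ ht x := Finset.single_le_sum (fun j _ => hx.2 j) (Finset.mem_univ i)
  -- decomposition of β
  have hdecomp : β = ∑ s ∈ β.support, (β s) • Finsupp.single s (1:ℤ) := by
    conv_lhs => rw [← Finsupp.sum_single β]
    rw [Finsupp.sum]
    exact Finset.sum_congr rfl fun s _ => by rw [Finsupp.smul_single, smul_eq_mul, mul_one]
  have hTs : ∀ s : I, T (Finsupp.single s (1:ℤ)) = ρ w (Finsupp.single (p s) 1) := by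
    intro s
    rw [hTfun]
    show ρ w (Finsupp.equivMapDomain p (Finsupp.single s 1)) = _
    rw [Finsupp.equivMapDomain_single]
  have hβ2 : β = ∑ s ∈ β.support, (β s) • (ρ w (Finsupp.single (p s) 1)) := by
    calc β = T β := hTβ.symm
      _ = T (∑ s ∈ β.support, (β s) • Finsupp.single s (1:ℤ)) := by rw [← hdecomp]
      _ = ∑ s ∈ β.support, (β s) • T (Finsupp.single s (1:ℤ)) := by
          rw [map_sum]
          exact Finset.sum_congr rfl fun s _ => map_zsmul T _ _
      _ = _ := Finset.sum_congr rfl fun s _ => by rw [hTs s]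
  -- support elements of β lie in J
  have hsuppJ : ∀ s ∈ β.support, s ∈ J := fun s hs =>
    hβJ s (Finsupp.mem_support_iff.mp hs)
  have hγpos : ∀ s ∈ β.support, IsPosV (ρ w (Finsupp.single (p s) 1)) :=
    fun s hs => hposγ s (hsuppJ s hs)
  -- height computation: each γ s has height 1
  have hhtβ1 : ht β = ∑ s ∈ β.support, β s * ht (ρ w (Finsupp.single (p s) 1)) := by
    conv_lhs => rw [hβ2]
    rw [hht_sum]
    exact Finset.sum_congr rfl fun s _ => hht_smul _ _
  have hhtβ2 : ht β = ∑ s ∈ β.support, β s * 1 := by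
    simp only [mul_one, hhtdef]
    rw [Finset.sum_subset (Finset.subset_univ β.support)]
    intro i _ hi
    exact Finsupp.notMem_support_iff.mp hi
  have hterm_le : ∀ s ∈ β.support, β s * 1 ≤ β s * ht (ρ w (Finsupp.single (p s) 1)) := by
    intro s hs
    exact mul_le_mul_of_nonneg_left (hht_ge _ (hγpos s hs)) (hβpos s)
  have heq : ∀ s ∈ β.support, β s * 1 = β s * ht (ρ w (Finsupp.single (p s) 1)) := by
    have := (Finset.sum_eq_sum_iff_of_le hterm_le).mp (hhtβ2 ▸ hhtβ1)
    exact this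
  have hγsingle : ∀ s ∈ β.support, ∃ s', ρ w (Finsupp.single (p s) 1) = Finsupp.single s' 1 := by
    intro s hs
    have hβs : β s ≠ 0 := Finsupp.mem_support_iff.mp hs
    have h1 : ht (ρ w (Finsupp.single (p s) 1)) = 1 := by
      have := heq s hs
      have := mul_left_cancel₀ hβs this
      omega
    exact exists_single_of_sum_eq_one _ (fun i => (hγpos s hs).2 i) h1
  -- the image index is in the support
  have hσmem : ∀ s ∈ β.support, ∀ s', ρ w (Finsupp.single (p s) 1) = Finsupp.single s' 1 →
      s' ∈ β.support := by
    intro s hs s' hs'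
    have hβs : 0 < β s :=
      lt_of_le_of_ne (hβpos s) (Ne.symm (Finsupp.mem_support_iff.mp hs))
    have hval : β s' = ∑ t ∈ β.support, β t * (ρ w (Finsupp.single (p t) 1)) s' := by
      conv_lhs => rw [hβ2]
      rw [Finsupp.finset_sum_apply]
      exact Finset.sum_congr rfl fun t _ => by rw [Finsupp.smul_apply, smul_eq_mul]
    have hge : β s * (ρ w (Finsupp.single (p s) 1)) s' ≤ β s' := by
      rw [hval]
      exact Finset.single_le_sum
        (fun t ht' => mul_nonneg (hβpos t) ((hγpos t ht').2 s')) hs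
    rw [hs'] at hge
    rw [Finsupp.single_eq_same, mul_one] at hge
    exact Finsupp.mem_support_iff.mpr (by omega)
  -- K = support of β works
  have hstab : IsStabR ρ p J w (↑β.support : Set I) := by
    constructor
    · intro s hs
      exact hsuppJ s hs
    · intro k hk
      obtain ⟨k', hk'⟩ := hγsingle k hk
      exact ⟨k', hσmem k hk k' hk', hk'⟩
  have ha0 := ha' 0
  refine ⟨⟨ha0.1.1, ?_⟩, ha0.2⟩
  intro i hi
  exact ⟨↑β.support, hstab, Finsupp.mem_support_iff.mpr (haβ i hi)⟩
end

section
/- Let $W$ be a Weyl group, $J \subset I$, $\delta$ a diagram automorphism, and let $(J_n, w_n)_{n\geq 0} \in \mathcal{T}(J,\delta)$ be the sequence corresponding to $w \in W^{\delta(J)}$. Suppose $u \in W_J$, $v \in W_{\delta(J)}$ with $\mathrm{supp}(v) = \delta(\mathrm{supp}(u))$ and $wv = ux$ for some $x \in W^{\delta(J)}$. Then for every $n \geq 0$, $u \in W_{J_n}$. -/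
/-!
Statement 13: with `(J_n, w_n) ∈ 𝓣(J, δ)` the Bédard sequence corresponding to
`w ∈ W^{δ(J)}`, if `u ∈ W_J`, `v ∈ W_{δ(J)}`, `supp(v) = δ(supp(u))` and
`w v = u x` with `x ∈ W^{δ(J)}`, then `u ∈ W_{J_n}` for every `n`.
-/

open CoxeterSystem

variable {I W : Type*} [Group W] {M : CoxeterMatrix I}

def Supp (cs : CoxeterSystem M W) (w : W) : Set I :=
  {i | ∃ ω : List I, cs.IsReduced ω ∧ cs.wordProd ω = w ∧ i ∈ ω}

attribute [local instance] Classical.propDecidable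

namespace BedardAux

variable (cs : CoxeterSystem M W)

/-- The Tits permutation attached to a simple reflection. -/
noncomputable def eta (i : I) : Equiv.Perm (W × ZMod 2) :=
  Function.Involutive.toPerm
    (fun x => (cs.simple i * x.1 * cs.simple i, x.2 + if x.1 = cs.simple i then 1 else 0))
    (by
      rintro ⟨t, ε⟩
      have hc : (cs.simple i * t * cs.simple i = cs.simple i) ↔ (t = cs.simple i) := by
        constructor
        · intro h
          have := congrArg (fun z => cs.simple i * z * cs.simple i) h
          simpa [mul_assoc, cs.simple_mul_simple_self, cs.simple_mul_simple_cancel_left] using this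
        · rintro rfl; simp [cs.simple_mul_simple_self, mul_assoc, cs.simple_mul_simple_cancel_left]
      simp only [Prod.mk.injEq]
      constructor
      · simp [mul_assoc, cs.simple_mul_simple_self, cs.simple_mul_simple_cancel_left]
      · by_cases h : t = cs.simple i
        · simp only [if_pos h, if_pos (hc.mpr h)]
          rw [add_assoc]
          norm_num
          exact (by decide : (1 : ZMod 2) + 1 = 0)
        · rw [if_neg h, if_neg (fun hh => h (hc.mp hh))]; simp   )

lemma eta_apply (i : I) (t : W) (ε : ZMod 2) :
    eta cs i (t, ε) = (cs.simple i * t * cs.simple i, ε + if t = cs.simple i then 1 else 0) := rfl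

lemma prod_eta_apply (ω : List I) (t : W) (ε : ZMod 2) :
    ((ω.map (eta cs)).prod) (t, ε)
      = (cs.wordProd ω * t * (cs.wordProd ω)⁻¹,
         ε + (((cs.rightInvSeq ω).count t : ℕ) : ZMod 2)) := by
  induction ω generalizing ε with
  | nil => simp [cs.wordProd_nil]
  | cons i ω ih =>
      have hris : cs.rightInvSeq (i :: ω)
          = ((cs.wordProd ω)⁻¹ * cs.simple i * cs.wordProd ω) :: cs.rightInvSeq ω := rfl
      simp only [List.map_cons, List.prod_cons, Equiv.Perm.mul_apply, ih, eta_apply,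
        cs.wordProd_cons, hris, List.count_cons, Prod.mk.injEq]
      constructor
      · rw [mul_inv_rev, cs.inv_simple]; group
      · have hiff : (cs.wordProd ω * t * (cs.wordProd ω)⁻¹ = cs.simple i)
            ↔ ((cs.wordProd ω)⁻¹ * cs.simple i * cs.wordProd ω = t) := by
          constructor
          · intro h; rw [← h]; group
          · intro h; rw [← h]; group
        by_cases h : cs.wordProd ω * t * (cs.wordProd ω)⁻¹ = cs.simple i
        · have h2 : ((cs.wordProd ω)⁻¹ * cs.simple i * cs.wordProd ω == t) = true := by
            simp [hiff.mp h]
          rw [if_pos h, h2]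
          simp only [if_true]
          push_cast
          ring
        · have h2 : ((cs.wordProd ω)⁻¹ * cs.simple i * cs.wordProd ω == t) = false := by
            simp only [beq_eq_false_iff_ne, ne_eq]
            exact fun hh => h (hiff.mpr hh)
          rw [if_neg h, h2]
          simp only [Bool.false_eq_true, if_false]
          push_cast
          ring
/-- Alternating word `[i,j,i,j,...]` of length `2m`. -/
def dih (i j : I) : ℕ → List I
  | 0 => []
  | m + 1 => i :: j :: dih i j m

section Dihedral

variable (i j : I)

private lemma sj_q_pow (a : ℕ) :
    cs.simple j * (cs.simple i * cs.simple j) ^ a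
      = ((cs.simple i * cs.simple j) ^ a)⁻¹ * cs.simple j := by
  induction a with
  | zero => simp
  | succ a ih =>
      have h1 : cs.simple j * (cs.simple i * cs.simple j)
          = (cs.simple i * cs.simple j)⁻¹ * cs.simple j := by
        rw [mul_inv_rev, cs.inv_simple, cs.inv_simple]; group
      calc cs.simple j * (cs.simple i * cs.simple j) ^ (a + 1)
          = (cs.simple j * (cs.simple i * cs.simple j) ^ a) * (cs.simple i * cs.simple j) := by
            rw [pow_succ, mul_assoc]
        _ = ((cs.simple i * cs.simple j) ^ a)⁻¹
              * (cs.simple j * (cs.simple i * cs.simple j)) := by rw [ih, mul_assoc]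
        _ = ((cs.simple i * cs.simple j) ^ (a+1))⁻¹ * cs.simple j := by
            rw [h1, ← mul_assoc, ← mul_inv_rev, ← pow_succ']

private lemma q_pow_sj (a : ℕ) :
    ((cs.simple i * cs.simple j) ^ a)⁻¹ * cs.simple j
      = cs.simple j * (cs.simple i * cs.simple j) ^ a := (sj_q_pow cs i j a).symm

lemma wordProd_dih (m : ℕ) :
    cs.wordProd (dih i j m) = (cs.simple i * cs.simple j) ^ m := by
  induction m with
  | zero => simp [dih]
  | succ m ih =>
      show cs.wordProd (i :: j :: dih i j m) = _
      rw [cs.wordProd_cons, cs.wordProd_cons, ih, pow_succ']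
      group

lemma prod_map_eta_dih (m : ℕ) :
    ((dih i j m).map (eta cs)).prod = (eta cs i * eta cs j) ^ m := by
  induction m with
  | zero => simp [dih]
  | succ m ih =>
      show ((i :: j :: dih i j m).map (eta cs)).prod = _
      rw [List.map_cons, List.map_cons, List.prod_cons, List.prod_cons, ih, pow_succ']
      group

lemma ris_dih (m : ℕ) :
    cs.rightInvSeq (dih i j m)
      = ((List.range (2*m)).reverse).map
          (fun r => cs.simple j * (cs.simple i * cs.simple j) ^ r) := by
  induction m with
  | zero => simp [dih]
  | succ m ih =>
      have hcons : cs.rightInvSeq (dih i j (m+1))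
          = ((cs.wordProd (j :: dih i j m))⁻¹ * cs.simple i * cs.wordProd (j :: dih i j m))
            :: ((cs.wordProd (dih i j m))⁻¹ * cs.simple j * cs.wordProd (dih i j m))
            :: cs.rightInvSeq (dih i j m) := rfl
      have hpm := wordProd_dih cs i j m
      have he1 : (cs.wordProd (dih i j m))⁻¹ * cs.simple j * cs.wordProd (dih i j m)
          = cs.simple j * (cs.simple i * cs.simple j) ^ (2*m) := by
        rw [hpm, mul_assoc, sj_q_pow, ← mul_assoc, ← mul_inv_rev, ← pow_add, q_pow_sj,
          ← two_mul]
      have he0 : (cs.wordProd (j :: dih i j m))⁻¹ * cs.simple i * cs.wordProd (j :: dih i j m)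
          = cs.simple j * (cs.simple i * cs.simple j) ^ (2*m+1) := by
        rw [cs.wordProd_cons, hpm, mul_inv_rev, cs.inv_simple]
        simp only [mul_assoc]
        have hins : cs.simple i * (cs.simple j * (cs.simple i * cs.simple j) ^ m)
            = (cs.simple i * cs.simple j) ^ (m+1) := by
          rw [← mul_assoc, ← pow_succ']
        rw [hins, sj_q_pow, ← mul_assoc, ← mul_inv_rev, ← pow_add, q_pow_sj,
          (by omega : m + 1 + m = 2*m+1)]
      have hrange : (List.range (2*(m+1))).reverse
          = (2*m+1) :: (2*m) :: (List.range (2*m)).reverse := by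
        have h2 : 2*(m+1) = (2*m+1)+1 := by omega
        rw [h2, List.range_succ, List.range_succ]
        simp
      rw [hcons, he0, he1, ih, hrange, List.map_cons, List.map_cons]

lemma count_ris_dih_even (m : ℕ) (h1 : (cs.simple i * cs.simple j) ^ m = 1) (t : W) :
    ∃ c : ℕ, (cs.rightInvSeq (dih i j m)).count t = 2 * c := by
  rw [ris_dih, List.map_reverse, List.count_reverse]
  rw [List.count_eq_countP, List.countP_map]
  have h2m : 2*m = m + m := by omega
  rw [h2m, List.range_add, List.countP_append]
  have hfun : ((fun x => x == t) ∘ (fun r => cs.simple j * (cs.simple i * cs.simple j) ^ r))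
        ∘ (fun r => m + r)
      = ((fun x => x == t) ∘ (fun r => cs.simple j * (cs.simple i * cs.simple j) ^ r)) := by
    funext r
    simp only [Function.comp_apply, pow_add, h1, one_mul]
  rw [List.countP_map, hfun]
  exact ⟨_, (two_mul _).symm⟩

end Dihedral

lemma eta_liftable : M.IsLiftable (fun k => eta cs k) := by
  intro i j
  have hq : (cs.simple i * cs.simple j) ^ M i j = 1 := cs.simple_mul_simple_pow i j
  rw [← prod_map_eta_dih]
  apply Equiv.ext
  rintro ⟨t, ε⟩
  rw [prod_eta_apply, wordProd_dih, hq]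
  obtain ⟨c, hc⟩ := count_ris_dih_even cs i j (M i j) hq t
  rw [hc]
  simp only [one_mul, inv_one, mul_one, Equiv.Perm.coe_one, id_eq]
  have h0 : ((2 * c : ℕ) : ZMod 2) = 0 := by
    push_cast
    rw [(by decide : (2 : ZMod 2) = 0), zero_mul]
  rw [h0, add_zero]

noncomputable def Phi : W →* Equiv.Perm (W × ZMod 2) :=
  cs.lift ⟨fun k => eta cs k, eta_liftable cs⟩

lemma Phi_wordProd (ω : List I) : Phi cs (cs.wordProd ω) = ((ω.map (eta cs)).prod) := by
  induction ω with
  | nil => simp [cs.wordProd_nil]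
  | cons k ω ih =>
      rw [cs.wordProd_cons, List.map_cons, List.prod_cons, map_mul, ih]
      congr 1
      exact cs.lift_apply_simple (eta_liftable cs) k

lemma count_parity {ω ω' : List I} (h : cs.wordProd ω = cs.wordProd ω') (t : W) :
    (((cs.rightInvSeq ω).count t : ℕ) : ZMod 2) = ((cs.rightInvSeq ω').count t : ℕ) := by
  have h1 : ((ω.map (eta cs)).prod) (t, 0) = ((ω'.map (eta cs)).prod) (t, 0) := by
    rw [← Phi_wordProd, ← Phi_wordProd, h]
  rw [prod_eta_apply, prod_eta_apply, h] at h1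
  have := congrArg Prod.snd h1
  simpa using this
lemma simple_mem_rightInvSeq_of_descent {ω : List I} (hω : cs.IsReduced ω) {k : I}
    (h : cs.length (cs.wordProd ω * cs.simple k) < cs.length (cs.wordProd ω)) :
    cs.simple k ∈ cs.rightInvSeq ω := by
  by_contra hn
  obtain ⟨ω', hred', heq'⟩ := cs.exists_reduced_word' (cs.wordProd ω * cs.simple k)
  have hpe : cs.wordProd (ω.concat k) = cs.wordProd ω' := by
    rw [cs.wordProd_concat]; exact heq'
  have hpar := count_parity cs hpe (cs.simple k)
  have hconj : (MulAut.conj (cs.simple k)) (cs.simple k) = cs.simple k := by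
    simp [MulAut.conj_apply, cs.inv_simple, cs.simple_mul_simple_cancel_right]
  have hcnt : (cs.rightInvSeq (ω.concat k)).count (cs.simple k)
      = (cs.rightInvSeq ω).count (cs.simple k) + 1 := by
    rw [cs.rightInvSeq_concat, List.concat_eq_append, List.count_append]
    congr 1
    · nth_rewrite 1 [← hconj]
      exact List.count_map_of_injective _ _ (MulAut.conj (cs.simple k)).injective _
    · simp
  have hz : (cs.rightInvSeq ω).count (cs.simple k) = 0 :=
    List.count_eq_zero_of_not_mem hn
  rw [hcnt, hz] at hpar
  have hmem' : cs.simple k ∈ cs.rightInvSeq ω' := by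
    by_contra hn'
    rw [List.count_eq_zero_of_not_mem hn'] at hpar
    simp at hpar
  have hinv := cs.isRightInversion_of_mem_rightInvSeq hred' hmem'
  have h2 : cs.length (cs.wordProd ω' * cs.simple k) < cs.length (cs.wordProd ω') := hinv.2
  rw [← heq'] at h2
  rw [cs.simple_mul_simple_cancel_right] at h2
  omega

theorem right_exchange' {ω : List I} (hω : cs.IsReduced ω) {k : I}
    (h : cs.length (cs.wordProd ω * cs.simple k) < cs.length (cs.wordProd ω)) :
    ∃ q < ω.length, cs.wordProd ω * cs.simple k = cs.wordProd (ω.eraseIdx q) := by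
  have hm := simple_mem_rightInvSeq_of_descent cs hω h
  obtain ⟨q, hq, hg⟩ := List.getElem_of_mem hm
  have hq' : q < ω.length := by
    have := cs.length_rightInvSeq ω
    omega
  refine ⟨q, hq', ?_⟩
  have hgd : (cs.rightInvSeq ω).getD q 1 = cs.simple k := by
    rw [List.getD_eq_getElem _ _ hq, hg]
  have := cs.wordProd_mul_getD_rightInvSeq ω q
  rw [hgd] at this
  exact this

theorem left_exchange' {ω : List I} (hω : cs.IsReduced ω) {k : I}
    (h : cs.length (cs.simple k * cs.wordProd ω) < cs.length (cs.wordProd ω)) :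
    ∃ ω' : List I, (∀ a ∈ ω', a ∈ ω) ∧ ω'.length + 1 = ω.length ∧
      cs.wordProd ω' = cs.simple k * cs.wordProd ω := by
  have hrev : cs.IsReduced ω.reverse := (cs.isReduced_reverse_iff ω).mpr hω
  have hlen : cs.length (cs.wordProd ω.reverse * cs.simple k)
      < cs.length (cs.wordProd ω.reverse) := by
    rw [cs.wordProd_reverse]
    have h1 : (cs.wordProd ω)⁻¹ * cs.simple k = (cs.simple k * cs.wordProd ω)⁻¹ := by
      rw [mul_inv_rev, cs.inv_simple]
    rw [h1, cs.length_inv, cs.length_inv]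
    exact h
  obtain ⟨q, hq, he⟩ := right_exchange' cs hrev hlen
  refine ⟨(ω.reverse.eraseIdx q).reverse, ?_, ?_, ?_⟩
  · intro a ha
    rw [List.mem_reverse] at ha
    have := (List.eraseIdx_sublist ω.reverse q).subset ha
    rwa [List.mem_reverse] at this
  · rw [List.length_reverse, List.length_eraseIdx_of_lt (by simpa using hq)]
    simp only [List.length_reverse] at hq ⊢
    omega
  · rw [cs.wordProd_reverse, ← he, cs.wordProd_reverse, mul_inv_rev, inv_inv, cs.inv_simple]
lemma parab_mono {L L' : Set I} (h : L ⊆ L') : parab cs L ≤ parab cs L' :=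
  Subgroup.closure_mono (Set.image_mono h)

lemma simple_mem_parab {L : Set I} {i : I} (h : i ∈ L) : cs.simple i ∈ parab cs L :=
  Subgroup.subset_closure ⟨i, h, rfl⟩

lemma wordProd_mem_parab {L : Set I} {ω : List I} (h : ∀ a ∈ ω, a ∈ L) :
    cs.wordProd ω ∈ parab cs L := by
  induction ω with
  | nil => rw [cs.wordProd_nil]; exact (parab cs L).one_mem
  | cons a ω ih =>
      rw [cs.wordProd_cons]
      exact mul_mem (simple_mem_parab cs (h a (List.mem_cons_self (a := a) (l := ω))))
        (ih fun b hb => h b (List.mem_cons_of_mem a hb))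

lemma exists_word_of_mem_parab {L : Set I} {u : W} (h : u ∈ parab cs L) :
    ∃ ω : List I, (∀ a ∈ ω, a ∈ L) ∧ cs.wordProd ω = u := by
  refine Subgroup.closure_induction ?_ ?_ ?_ ?_ h
  · rintro g ⟨i, hi, rfl⟩
    exact ⟨[i], by simpa using hi, by simp⟩
  · exact ⟨[], by simp, by simp⟩
  · rintro g g' _ _ ⟨ω, hω, rfl⟩ ⟨ω', hω', rfl⟩
    refine ⟨ω ++ ω', ?_, cs.wordProd_append ω ω'⟩
    intro a ha
    rcases List.mem_append.mp ha with h1 | h1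
    exacts [hω a h1, hω' a h1]
  · rintro g _ ⟨ω, hω, rfl⟩
    exact ⟨ω.reverse, fun a ha => hω a (List.mem_reverse.mp ha), cs.wordProd_reverse ω⟩

lemma exists_reduced_subword_aux : ∀ N (ω : List I), ω.length ≤ N →
    ∃ ω' : List I, cs.IsReduced ω' ∧ (∀ a ∈ ω', a ∈ ω) ∧ cs.wordProd ω' = cs.wordProd ω := by
  intro N
  induction N with
  | zero =>
      intro ω h
      have : ω = [] := List.eq_nil_of_length_eq_zero (by omega)
      subst this
      exact ⟨[], by simp [CoxeterSystem.IsReduced], by simp, rfl⟩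
  | succ N ih =>
      intro ω hlen
      by_cases hred : cs.IsReduced ω
      · exact ⟨ω, hred, fun a ha => ha, rfl⟩
      · have hex : ∃ q, ¬ cs.IsReduced (ω.take q) := ⟨ω.length, by rwa [List.take_length]⟩
        have hQprop : ¬ cs.IsReduced (ω.take (Nat.find hex)) := Nat.find_spec hex
        have hQle : Nat.find hex ≤ ω.length := Nat.find_min' hex (by rwa [List.take_length])
        have hQpos : Nat.find hex ≠ 0 := by
          intro h0
          rw [h0] at hQprop
          exact hQprop (by simp [CoxeterSystem.IsReduced])
        obtain ⟨Q', hQeq⟩ : ∃ Q', Nat.find hex = Q' + 1 := ⟨Nat.find hex - 1, by omega⟩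
        rw [hQeq] at hQprop hQle
        have hQ'red : cs.IsReduced (ω.take Q') := by
          by_contra hc
          exact absurd hc (by simpa using Nat.find_min hex (by omega))
        have hQ'lt : Q' < ω.length := by omega
        have htake : ω.take (Q' + 1) = ω.take Q' ++ [ω[Q']] := by
          rw [List.take_succ, List.getElem?_eq_getElem hQ'lt]
          rfl
        have hlt0 : cs.length (cs.wordProd (ω.take Q')) = Q' := by
          have h1 : cs.length (cs.wordProd (ω.take Q')) = (ω.take Q').length := hQ'red
          rw [h1, List.length_take]
          omega
        have hlt : cs.length (cs.wordProd (ω.take Q') * cs.simple ω[Q'])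
            < cs.length (cs.wordProd (ω.take Q')) := by
          rcases cs.length_mul_simple (cs.wordProd (ω.take Q')) ω[Q'] with hc | hc
          · exfalso
            apply hQprop
            have : cs.length (cs.wordProd (ω.take (Q' + 1))) = (ω.take (Q' + 1)).length := by
              rw [htake, cs.wordProd_append, cs.wordProd_singleton, hc, hlt0]
              simp [List.length_take]
              omega
            exact this
          · omega
        obtain ⟨r, hr, hex2⟩ := right_exchange' cs hQ'red hlt
        set ω₂ := (ω.take Q').eraseIdx r ++ ω.drop (Q' + 1) with hω₂
        have hprod2 : cs.wordProd ω₂ = cs.wordProd ω := by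
          rw [hω₂, cs.wordProd_append, ← hex2]
          rw [← cs.wordProd_singleton, ← cs.wordProd_append, ← cs.wordProd_append]
          congr 1
          rw [← htake, List.take_append_drop]
        have hlen2 : ω₂.length ≤ N := by
          rw [hω₂, List.length_append, List.length_eraseIdx_of_lt hr, List.length_take,
            List.length_drop]
          rw [List.length_take] at hr
          omega
        obtain ⟨ω', hred', hsub', hprod'⟩ := ih ω₂ hlen2
        refine ⟨ω', hred', ?_, hprod'.trans hprod2⟩
        intro a ha
        rcases List.mem_append.mp (hsub' a ha) with h1 | h1
        · exact (List.take_sublist Q' ω).subset ((List.eraseIdx_sublist _ r).subset h1)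
        · exact (List.drop_sublist (Q' + 1) ω).subset h1

lemma exists_reduced_subword (ω : List I) :
    ∃ ω' : List I, cs.IsReduced ω' ∧ (∀ a ∈ ω', a ∈ ω) ∧ cs.wordProd ω' = cs.wordProd ω :=
  exists_reduced_subword_aux cs ω.length ω le_rfl

lemma exists_reduced_word_in {L : Set I} {u : W} (h : u ∈ parab cs L) :
    ∃ ω, cs.IsReduced ω ∧ (∀ a ∈ ω, a ∈ L) ∧ cs.wordProd ω = u := by
  obtain ⟨ω, hω, rfl⟩ := exists_word_of_mem_parab cs h
  obtain ⟨ω', h1, h2, h3⟩ := exists_reduced_subword cs ω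
  exact ⟨ω', h1, fun a ha => hω a (h2 a ha), h3⟩

lemma eq_simple_of_mem_parab_of_length_one {L : Set I} {z : W} (h : z ∈ parab cs L)
    (hl : cs.length z = 1) : ∃ k ∈ L, z = cs.simple k := by
  obtain ⟨ω, hred, hsub, hprod⟩ := exists_reduced_word_in cs h
  have h1 : cs.length (cs.wordProd ω) = ω.length := hred
  rw [hprod, hl] at h1
  obtain ⟨k, rfl⟩ := List.length_eq_one_iff.mp h1.symm
  exact ⟨k, hsub k (by simp), by rw [← hprod, cs.wordProd_singleton]⟩

lemma simple_mem_parab_of_reduced : ∀ N (ω ω' : List I), ω.length ≤ N →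
    cs.IsReduced ω → cs.IsReduced ω' → cs.wordProd ω = cs.wordProd ω' →
    ∀ a ∈ ω, cs.simple a ∈ parab cs {b | b ∈ ω'} := by
  intro N
  induction N with
  | zero =>
      intro ω ω' hlen _ _ _ a ha
      have : ω = [] := List.eq_nil_of_length_eq_zero (by omega)
      subst this
      cases ha
  | succ N ih =>
      rintro ω ω' hlen hred hred' hprod a ha
      cases ω with
      | nil => cases ha
      | cons a' ω₁ =>
          have hred₁ : cs.IsReduced ω₁ := by
            have := hred.drop 1
            simpa using this
          have hl₁ : cs.length (cs.wordProd ω₁) = ω₁.length := hred₁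
          have hl : cs.length (cs.wordProd (a' :: ω₁)) = ω₁.length + 1 := by
            have : cs.length (cs.wordProd (a' :: ω₁)) = (a' :: ω₁).length := hred
            rw [this, List.length_cons]
          have hlt : cs.length (cs.simple a' * cs.wordProd ω') < cs.length (cs.wordProd ω') := by
            rw [← hprod, cs.wordProd_cons, cs.simple_mul_simple_cancel_left, hl₁,
              ← cs.wordProd_cons, hl]
            omega
          obtain ⟨ω'', hsub, hlen'', hprod''⟩ := left_exchange' cs hred' hlt
          have hp2 : cs.wordProd ω'' = cs.wordProd ω₁ := by
            rw [hprod'', ← hprod, cs.wordProd_cons, cs.simple_mul_simple_cancel_left]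
          have hred'' : cs.IsReduced ω'' := by
            have hle' : cs.length (cs.wordProd ω') = ω'.length := hred'
            show cs.length (cs.wordProd ω'') = ω''.length
            rw [hp2, hl₁]
            have : cs.length (cs.wordProd (a' :: ω₁)) = ω'.length := by rw [hprod, hle']
            rw [hl] at this
            omega
          rcases List.mem_cons.mp ha with rfl | hmem₁
          · have hrepr : cs.simple a = cs.wordProd ω'' * (cs.wordProd ω')⁻¹ := by
              rw [hprod'', mul_assoc, mul_inv_cancel, mul_one]
            rw [hrepr]
            exact mul_mem (wordProd_mem_parab cs (fun b hb => hsub b hb))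
              (inv_mem (wordProd_mem_parab cs (fun b hb => hb)))
          · have hstep := ih ω₁ ω'' (by simp at hlen; omega)
              hred₁ hred'' hp2.symm a hmem₁
            exact parab_mono cs (fun b hb => hsub b hb) hstep

lemma supp_rep {L : Set I} {u : W} (hu : u ∈ parab cs L) {i : I} (hi : i ∈ Supp cs u) :
    ∃ b ∈ L, cs.simple i = cs.simple b := by
  obtain ⟨ω, hred, hprod, hmem⟩ := hi
  obtain ⟨ω', hred', hsub', hprod'⟩ := exists_reduced_word_in cs hu
  have hs : cs.simple i ∈ parab cs {b | b ∈ ω'} :=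
    simple_mem_parab_of_reduced cs ω.length ω ω' le_rfl hred hred'
      (by rw [hprod, hprod']) i hmem
  obtain ⟨k, hk, hz⟩ := eq_simple_of_mem_parab_of_length_one cs hs (cs.length_simple i)
  exact ⟨k, hsub' k hk, hz⟩
lemma addL_aux (K : Set I) : ∀ N (d : W), cs.length d ≤ N →
    (∀ k ∈ K, cs.length d < cs.length (cs.simple k * d)) →
    ∀ c ∈ parab cs K, cs.length (c * d) = cs.length c + cs.length d := by
  intro N
  induction N with
  | zero =>
      intro d hd _ c _
      have hd1 : d = 1 := cs.length_eq_zero_iff.mp (by omega)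
      subst hd1
      simp
  | succ N ih =>
      intro d hdlen hdesc c hc
      rcases eq_or_ne d 1 with rfl | hne
      · simp
      · obtain ⟨i, hdi⟩ := cs.exists_rightDescent_of_ne_one hne
        have hdi' : cs.length (d * cs.simple i) < cs.length d := hdi
        have hld₁ : cs.length (d * cs.simple i) + 1 = cs.length d := by
          have := cs.length_mul_simple d i; omega
        set d₁ := d * cs.simple i with hd₁def
        have hdd₁ : d = d₁ * cs.simple i := by
          rw [hd₁def, cs.simple_mul_simple_cancel_right]
        have hdesc₁ : ∀ k ∈ K, cs.length d₁ < cs.length (cs.simple k * d₁) := by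
          intro k hk
          have h1 := hdesc k hk
          have h2 := cs.length_mul_simple (cs.simple k * d) i
          have h3 : cs.simple k * d₁ = cs.simple k * d * cs.simple i := by
            rw [hd₁def, mul_assoc]
          rw [h3]
          omega
        have ihd₁ := ih d₁ (by omega) hdesc₁
        obtain ⟨κ, hκred, hκsub, hκprod⟩ := exists_reduced_word_in cs hc
        obtain ⟨ρ₁, hρred, hρprod⟩ := cs.exists_reduced_word' d₁
        have hlc : cs.length c = κ.length := by rw [← hκprod]; exact hκred
        have hld₁' : cs.length d₁ = ρ₁.length := by rw [hρprod]; exact hρred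
        have hcd₁ : cs.length (c * d₁) = cs.length c + cs.length d₁ := ihd₁ c hc
        have hνprod : cs.wordProd (κ ++ ρ₁) = c * d₁ := by
          rw [cs.wordProd_append, hκprod, ← hρprod]
        have hνred : cs.IsReduced (κ ++ ρ₁) := by
          show cs.length (cs.wordProd (κ ++ ρ₁)) = (κ ++ ρ₁).length
          rw [hνprod, hcd₁, List.length_append, hlc, hld₁']
        rcases cs.length_mul_simple (c * d₁) i with hA | hB
        · have hcde : c * d = c * d₁ * cs.simple i := by
            simp [hd₁def, mul_assoc, cs.simple_mul_simple_self]
          rw [hcde, hA, hcd₁]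
          omega
        · exfalso
          have hB' : cs.length (cs.wordProd (κ ++ ρ₁) * cs.simple i)
              < cs.length (cs.wordProd (κ ++ ρ₁)) := by
            rw [hνprod]; omega
          obtain ⟨q, hq, hexq⟩ := right_exchange' cs hνred hB'
          by_cases hql : q < κ.length
          · have herase : (κ ++ ρ₁).eraseIdx q = κ.eraseIdx q ++ ρ₁ :=
              List.eraseIdx_append_of_lt_length hql _
            have hce : c * d = cs.wordProd (κ.eraseIdx q) * d₁ := by
              rw [hdd₁, ← mul_assoc, ← hνprod, hexq, herase, cs.wordProd_append, hρprod]
            set c₂ := c⁻¹ * cs.wordProd (κ.eraseIdx q) with hc₂def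
            have hc₂mem : c₂ ∈ parab cs K := by
              refine mul_mem (inv_mem hc) (wordProd_mem_parab cs ?_)
              intro a ha
              exact hκsub a ((List.eraseIdx_sublist κ q).subset ha)
            have hc₂d₁ : c₂ * d₁ = d := by
              rw [hc₂def, mul_assoc, ← hce, ← mul_assoc, inv_mul_cancel, one_mul]
            have hlen₂ : cs.length (c₂ * d₁) = cs.length c₂ + cs.length d₁ := ihd₁ c₂ hc₂mem
            have hlc₂ : cs.length c₂ = 1 := by
              rw [hc₂d₁] at hlen₂
              omega
            obtain ⟨k, hkK, hc₂eq⟩ := eq_simple_of_mem_parab_of_length_one cs hc₂mem hlc₂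
            have hskd : cs.simple k * d = d₁ := by
              rw [← hc₂d₁, hc₂eq, cs.simple_mul_simple_cancel_left]
            have := hdesc k hkK
            rw [hskd] at this
            omega
          · push_neg at hql
            have herase : (κ ++ ρ₁).eraseIdx q = κ ++ ρ₁.eraseIdx (q - κ.length) :=
              List.eraseIdx_append_of_length_le hql _
            have hdpe : d = cs.wordProd (ρ₁.eraseIdx (q - κ.length)) := by
              have h5 : c * d = c * cs.wordProd (ρ₁.eraseIdx (q - κ.length)) := by
                rw [hdd₁, ← mul_assoc, ← hνprod, hexq, herase, cs.wordProd_append, hκprod]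
              exact mul_left_cancel h5
            have h6 : cs.length d ≤ ρ₁.length := by
              rw [hdpe]
              calc cs.length (cs.wordProd (ρ₁.eraseIdx (q - κ.length)))
                  ≤ (ρ₁.eraseIdx (q - κ.length)).length := cs.length_wordProd_le _
                _ ≤ ρ₁.length := List.length_eraseIdx_le _ _
            omega

lemma length_mul_left_of_no_descent {J : Set I} {d : W}
    (h : ∀ j ∈ J, cs.length d < cs.length (cs.simple j * d)) :
    ∀ b ∈ parab cs J, cs.length (b * d) = cs.length b + cs.length d :=
  fun b hb => addL_aux cs J (cs.length d) d le_rfl h b hb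

lemma length_mul_right_of_no_descent {K : Set I} {x : W}
    (h : ∀ k ∈ K, cs.length x < cs.length (x * cs.simple k)) :
    ∀ c ∈ parab cs K, cs.length (x * c) = cs.length x + cs.length c := by
  intro c hc
  have hinvdesc : ∀ k ∈ K, cs.length x⁻¹ < cs.length (cs.simple k * x⁻¹) := by
    intro k hk
    have h1 : cs.length (cs.simple k * x⁻¹) = cs.length (x * cs.simple k) := by
      rw [← cs.length_inv, mul_inv_rev, inv_inv, cs.inv_simple]
    rw [h1, cs.length_inv]
    exact h k hk
  have h2 := addL_aux cs K (cs.length x⁻¹) x⁻¹ le_rfl hinvdesc c⁻¹ (inv_mem hc)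
  have h3 : (c⁻¹ * x⁻¹) = (x * c)⁻¹ := by rw [mul_inv_rev]
  rw [h3, cs.length_inv, cs.length_inv, cs.length_inv] at h2
  omega

lemma deodhar {J : Set I} {d : W} (hdJ : ∀ j ∈ J, cs.length d < cs.length (cs.simple j * d))
    {k : I} (hdk : cs.length (d * cs.simple k) = cs.length d + 1) :
    (∃ j ∈ J, d * cs.simple k * d⁻¹ = cs.simple j) ∨
      (∀ j ∈ J, cs.length (d * cs.simple k) < cs.length (cs.simple j * (d * cs.simple k))) := by
  by_cases hL : ∃ j ∈ J, d * cs.simple k * d⁻¹ = cs.simple j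
  · left; exact hL
  right
  intro j hj
  by_contra hcon
  push_neg at hcon
  have hne := cs.length_simple_mul_ne (d * cs.simple k) j
  have hlow : cs.length (cs.simple j * (d * cs.simple k)) + 1 = cs.length (d * cs.simple k) := by
    have := cs.length_simple_mul (d * cs.simple k) j
    omega
  obtain ⟨ρ, hρred, hρprod⟩ := cs.exists_reduced_word' d
  have hρlen : cs.length d = ρ.length := by rw [hρprod]; exact hρred
  have hylen : cs.length (cs.simple j * d) = cs.length d + 1 := by
    have h1 := cs.length_simple_mul d j
    have h2 := hdJ j hj
    omega
  have hyred : cs.IsReduced (j :: ρ) := by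
    show cs.length (cs.wordProd (j :: ρ)) = (j :: ρ).length
    rw [cs.wordProd_cons, ← hρprod, hylen]
    simp [hρlen]
  have hydesc : cs.length (cs.wordProd (j :: ρ) * cs.simple k)
      < cs.length (cs.wordProd (j :: ρ)) := by
    rw [cs.wordProd_cons, ← hρprod, mul_assoc, hylen]
    omega
  obtain ⟨q, hq, hexq⟩ := right_exchange' cs hyred hydesc
  rw [cs.wordProd_cons, ← hρprod] at hexq
  cases q with
  | zero =>
      rw [List.eraseIdx_cons_zero, ← hρprod] at hexq
      apply hL
      refine ⟨j, hj, ?_⟩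
      have h7 : d * cs.simple k = cs.simple j * d := by
        have := congrArg (fun z => cs.simple j * z) hexq
        simpa [← mul_assoc, cs.simple_mul_simple_cancel_left] using this
      rw [h7, mul_assoc, mul_inv_cancel, mul_one]
  | succ q' =>
      rw [List.eraseIdx_cons_succ, cs.wordProd_cons] at hexq
      have h8 : d * cs.simple k = cs.wordProd (ρ.eraseIdx q') := by
        have := hexq
        rw [mul_assoc] at this
        exact mul_left_cancel this
      have h9 : cs.length (d * cs.simple k) ≤ ρ.length := by
        rw [h8]
        calc cs.length (cs.wordProd (ρ.eraseIdx q')) ≤ (ρ.eraseIdx q').length :=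
              cs.length_wordProd_le _
          _ ≤ ρ.length := List.length_eraseIdx_le _ _
      omega

theorem kilmoyer {Js Ks : Set I} {d : W}
    (hdJ : ∀ j ∈ Js, cs.length d < cs.length (cs.simple j * d))
    (hdK : ∀ k ∈ Ks, cs.length d < cs.length (d * cs.simple k)) :
    ∀ κ : List I, cs.IsReduced κ → (∀ a ∈ κ, a ∈ Ks) → ∀ b ∈ parab cs Js,
      (∀ k ∈ Ks, cs.length (b * d * cs.wordProd κ)
          < cs.length (b * d * cs.wordProd κ * cs.simple k)) →
      ∀ k ∈ κ, ∃ j ∈ Js, d * cs.simple k * d⁻¹ = cs.simple j := by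
  intro κ
  induction κ with
  | nil => intro _ _ b _ _ k hk; cases hk
  | cons k₀ κ₁ ih =>
      intro hκred hκsub b hb hmin
      have hk₀K : k₀ ∈ Ks := hκsub k₀ (by simp)
      have hdk₀ : cs.length (d * cs.simple k₀) = cs.length d + 1 := by
        have h1 := hdK k₀ hk₀K
        have h2 := cs.length_mul_simple d k₀
        omega
      have hκ₁red : cs.IsReduced κ₁ := by
        have := hκred.drop 1
        simpa using this
      rcases deodhar cs hdJ hdk₀ with ⟨j, hj, hconj⟩ | hfree
      · have hdk : d * cs.simple k₀ = cs.simple j * d := by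
          have := congrArg (fun z => z * d) hconj
          simpa [mul_assoc] using this
        have hx' : b * d * cs.wordProd (k₀ :: κ₁)
            = (b * cs.simple j) * d * cs.wordProd κ₁ := by
          rw [cs.wordProd_cons, show b * d * (cs.simple k₀ * cs.wordProd κ₁)
            = b * (d * cs.simple k₀) * cs.wordProd κ₁ by group, hdk]
          group
        have hbs : b * cs.simple j ∈ parab cs Js := mul_mem hb (simple_mem_parab cs hj)
        have hmin' : ∀ k ∈ Ks, cs.length ((b * cs.simple j) * d * cs.wordProd κ₁)
            < cs.length ((b * cs.simple j) * d * cs.wordProd κ₁ * cs.simple k) := by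
          intro k hk
          have := hmin k hk
          rwa [hx'] at this
        have hrest := ih hκ₁red (fun a ha => hκsub a (List.mem_cons_of_mem _ ha))
          (b * cs.simple j) hbs hmin'
        intro k hk
        rcases List.mem_cons.mp hk with rfl | hk₁
        · exact ⟨j, hj, hconj⟩
        · exact hrest k hk₁
      · exfalso
        have hvK : cs.wordProd (k₀ :: κ₁) ∈ parab cs Ks := wordProd_mem_parab cs hκsub
        have hv₁K : cs.wordProd κ₁ ∈ parab cs Ks :=
          wordProd_mem_parab cs (fun a ha => hκsub a (List.mem_cons_of_mem _ ha))
        have hC1 := length_mul_right_of_no_descent cs hmin (cs.wordProd (k₀ :: κ₁))⁻¹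
          (inv_mem hvK)
        have hC2 := length_mul_right_of_no_descent cs hmin (cs.wordProd κ₁)⁻¹
          (inv_mem hv₁K)
        have hxv : b * d * cs.wordProd (k₀ :: κ₁) * (cs.wordProd (k₀ :: κ₁))⁻¹ = b * d := by
          group
        have hxv₁ : b * d * cs.wordProd (k₀ :: κ₁) * (cs.wordProd κ₁)⁻¹
            = b * (d * cs.simple k₀) := by
          rw [cs.wordProd_cons]
          group
        rw [hxv] at hC1
        rw [hxv₁] at hC2
        have hbd : cs.length (b * d) = cs.length b + cs.length d :=
          length_mul_left_of_no_descent cs hdJ b hb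
        have hbdk : cs.length (b * (d * cs.simple k₀))
            = cs.length b + cs.length (d * cs.simple k₀) :=
          length_mul_left_of_no_descent cs hfree b hb
        have hlv : cs.length (cs.wordProd (k₀ :: κ₁)) = κ₁.length + 1 := by
          have : cs.length (cs.wordProd (k₀ :: κ₁)) = (k₀ :: κ₁).length := hκred
          simpa using this
        have hlv₁ : cs.length (cs.wordProd κ₁) = κ₁.length := hκ₁red
        rw [cs.length_inv, hlv] at hC1
        rw [cs.length_inv, hlv₁] at hC2
        omega
end BedardAux

theorem mem_parab_Jn [Finite I]
    (cs : CoxeterSystem M W) (p : Equiv.Perm I) (δ : MulAut W)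
    (hδ : ∀ i, δ (cs.simple i) = cs.simple (p i))
    (J : Set I) (Jseq : ℕ → Set I) (wseq : ℕ → W)
    (hJw : BedardSeq cs p J Jseq wseq)
    (w : W) (m : ℕ) (hm : ∀ n, m ≤ n → wseq n = w)
    (hw : MinRight cs (p '' J) w)
    (x u v : W) (hx : MinRight cs (p '' J) x)
    (hu : u ∈ parab cs J) (hv : v ∈ parab cs (p '' J))
    (hsupp : Supp cs v = p '' Supp cs u)
    (heq : w * v = u * x) :
    ∀ n, u ∈ parab cs (Jseq n) := by
  obtain ⟨hJ0, hJsucc, hmin, hstep⟩ := hJw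
  have hJdec : ∀ n, Jseq (n + 1) ⊆ Jseq n := by
    intro n i hi
    rw [hJsucc n] at hi
    exact hi.1
  have hJle : ∀ n N, Jseq (n + N) ⊆ Jseq n := by
    intro n N
    induction N with
    | zero => exact fun i h => h
    | succ N ihN => exact fun i hi => ihN (hJdec (n + N) hi)
  have hJsubJ : ∀ n, Jseq n ⊆ J := by
    intro n
    have h := hJle 0 n
    rw [Nat.zero_add, hJ0] at h
    exact h
  have hwdiff : ∀ n N, wseq (n + N) * (wseq n)⁻¹ ∈ parab cs (Jseq n) := by
    intro n N
    induction N with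
    | zero =>
        have h1 : wseq (n + 0) * (wseq n)⁻¹ = 1 := by rw [Nat.add_zero, mul_inv_cancel]
        rw [h1]
        exact (parab cs (Jseq n)).one_mem
    | succ N ihN =>
        show wseq (n + N + 1) * (wseq n)⁻¹ ∈ _
        have h2 : wseq (n + N + 1) * (wseq n)⁻¹
            = (wseq (n + N + 1) * (wseq (n + N))⁻¹) * (wseq (n + N) * (wseq n)⁻¹) := by
          group
        rw [h2]
        exact mul_mem (BedardAux.parab_mono cs (hJle n N) (hstep (n + N))) ihN
  intro n
  induction n with
  | zero => rw [hJ0]; exact hu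
  | succ n ihn =>
      have hdL : MinLeft cs (Jseq n) (wseq n) := (hmin n).1
      have hdR : MinRight cs (p '' Jseq n) (wseq n) := (hmin n).2
      have ha : w * (wseq n)⁻¹ ∈ parab cs (Jseq n) := by
        have h1 := hwdiff n m
        rwa [hm (n + m) (by omega)] at h1
      set b := u⁻¹ * (w * (wseq n)⁻¹) with hbdef
      have hb : b ∈ parab cs (Jseq n) := mul_mem (inv_mem ihn) ha
      obtain ⟨κ₀, hκ₀red, hκ₀prod⟩ := cs.exists_reduced_word' v
      have hletters : ∀ k ∈ κ₀, ∃ k' ∈ p '' Jseq n, cs.simple k = cs.simple k' := by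
        intro k hk
        have hkSupp : k ∈ Supp cs v := ⟨κ₀, hκ₀red, hκ₀prod.symm, hk⟩
        rw [hsupp] at hkSupp
        obtain ⟨i, hiSupp, rfl⟩ := hkSupp
        obtain ⟨b', hb'J, hsib⟩ := BedardAux.supp_rep cs ihn hiSupp
        refine ⟨p b', ⟨b', hb'J, rfl⟩, ?_⟩
        rw [← hδ, ← hδ, hsib]
      have hreword : ∀ (l : List I),
          (∀ k ∈ l, ∃ k' ∈ p '' Jseq n, cs.simple k = cs.simple k') →
          ∃ l', (∀ a ∈ l', a ∈ p '' Jseq n) ∧ l'.length = l.length ∧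
            cs.wordProd l' = cs.wordProd l := by
        intro l
        induction l with
        | nil => exact fun _ => ⟨[], by simp, rfl, rfl⟩
        | cons a l ihl =>
            intro hl
            obtain ⟨l', h1, h2, h3⟩ := ihl (fun k hk => hl k (List.mem_cons_of_mem _ hk))
            obtain ⟨k', hk', hs⟩ := hl a (by simp)
            refine ⟨k' :: l', ?_, by simp [h2], ?_⟩
            · intro a' ha'
              rcases List.mem_cons.mp ha' with rfl | h
              exacts [hk', h1 a' h]
            · rw [cs.wordProd_cons, cs.wordProd_cons, h3, hs]
      obtain ⟨κ, hκsub, hκlen, hκprod⟩ := hreword κ₀ hletters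
      have hκprodv : cs.wordProd κ = v := by rw [hκprod, ← hκ₀prod]
      have hκred : cs.IsReduced κ := by
        show cs.length (cs.wordProd κ) = κ.length
        rw [hκprodv, hκlen, hκ₀prod]
        exact hκ₀red
      have hxeq : x = b * wseq n * cs.wordProd κ := by
        rw [hκprodv, hbdef,
          show u⁻¹ * (w * (wseq n)⁻¹) * wseq n * v = u⁻¹ * (w * v) by group, heq]
        group
      have hKsubJ : p '' Jseq n ⊆ p '' J := Set.image_mono (hJsubJ n)
      have hxdesc : ∀ k ∈ p '' Jseq n, cs.length (b * wseq n * cs.wordProd κ)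
          < cs.length (b * wseq n * cs.wordProd κ * cs.simple k) := by
        intro k hk
        rw [← hxeq]
        have h1 := hx (cs.simple k) (BedardAux.simple_mem_parab cs (hKsubJ hk))
        have h2 := cs.length_mul_simple_ne x k
        omega
      have hdJdesc : ∀ j ∈ Jseq n, cs.length (wseq n) < cs.length (cs.simple j * wseq n) := by
        intro j hj
        have h1 := hdL (cs.simple j) (BedardAux.simple_mem_parab cs hj)
        have h2 := cs.length_simple_mul_ne (wseq n) j
        omega
      have hdKdesc : ∀ k ∈ p '' Jseq n,
          cs.length (wseq n) < cs.length (wseq n * cs.simple k) := by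
        intro k hk
        have h1 := hdR (cs.simple k) (BedardAux.simple_mem_parab cs hk)
        have h2 := cs.length_mul_simple_ne (wseq n) k
        omega
      have hT := BedardAux.kilmoyer cs hdJdesc hdKdesc κ hκred hκsub b hb hxdesc
      obtain ⟨ωu, hωured, hωusub, hωuprod⟩ := BedardAux.exists_reduced_word_in cs ihn
      rw [← hωuprod]
      apply BedardAux.wordProd_mem_parab
      intro a ha
      rw [hJsucc n]
      simp only [Set.mem_setOf_eq]
      refine ⟨hωusub a ha, ?_⟩
      have haSupp : a ∈ Supp cs u := ⟨ωu, hωured, hωuprod, ha⟩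
      have hpa : p a ∈ Supp cs v := by
        rw [hsupp]
        exact ⟨a, haSupp, rfl⟩
      have hvmem : v ∈ parab cs {b' | b' ∈ κ} := by
        rw [← hκprodv]
        exact BedardAux.wordProd_mem_parab cs (fun _ h => h)
      obtain ⟨kb, hkb, hskb⟩ := BedardAux.supp_rep cs hvmem hpa
      obtain ⟨j, hjJn, hconj⟩ := hT kb hkb
      refine ⟨j, hjJn, ?_⟩
      rw [hskb, ← hconj]
      group
end
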